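/- arXiv:1002.0368 — 6 statements merged into one kernel-verified Lean document; each statement's English description precedes it below -/
import Mathlib

section
/- Let H_S be an n×n complex Hermitian matrix, H_P an m×m complex Hermitian matrix having at least two distinct eigenvalues with least eigenvalue p0 and second-smallest distinct eigenvalue p1, Π the orthogonal projection onto the p0-eigenspace of H_P, and A an n×n Hermitian matrix with A·H_S = H_S·A whose least eigenvalue a_min satisfies a_min + p1 − p0 > 0. Set H1 = H_S ⊗ I_m + I_n ⊗ H_P and H2 = H1 + A ⊗ (I_m − Π) (Kronecker products). Then for any vector ψ in ℂ^(nm): ψ is an eigenvector of H1 with eigenvalue equal to the least eigenvalue of H1 if and only if ψ is an eigenvector of H2 with eigenvalue equal to the least eigenvalue of H2. -/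
open Matrix Kronecker

/-- `μ` is an eigenvalue of the complex square matrix `M`. -/
def IsEigenvalue {K : Type*} [Fintype K] (M : Matrix K K ℂ) (μ : ℝ) : Prop :=
  ∃ v : K → ℂ, v ≠ 0 ∧ M.mulVec v = (μ : ℂ) • v

/-- `μ` is the least (real) eigenvalue of the complex square matrix `M`. -/
def IsLeastEigenvalue {K : Type*} [Fintype K] (M : Matrix K K ℂ) (μ : ℝ) : Prop :=
  IsEigenvalue M μ ∧ ∀ ν : ℝ, IsEigenvalue M ν → μ ≤ ν

noncomputable section GSAux

/-- squared norm of a vector -/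
def gslNsq {ι : Type*} [Fintype ι] (v : ι → ℂ) : ℝ := ∑ i, Complex.normSq (v i)

lemma gslNsq_nonneg {ι : Type*} [Fintype ι] (v : ι → ℂ) : 0 ≤ gslNsq v :=
  Finset.sum_nonneg fun _ _ => Complex.normSq_nonneg _

lemma gslNsq_eq_zero {ι : Type*} [Fintype ι] {v : ι → ℂ} (h : gslNsq v = 0) : v = 0 := by
  funext i
  have := (Finset.sum_eq_zero_iff_of_nonneg (fun i _ => Complex.normSq_nonneg (v i))).1 h i
    (Finset.mem_univ i)
  simpa [Complex.normSq_eq_zero] using this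

lemma gslNsq_pos {ι : Type*} [Fintype ι] {v : ι → ℂ} (h : v ≠ 0) : 0 < gslNsq v :=
  lt_of_le_of_ne (gslNsq_nonneg v) (fun h0 => h (gslNsq_eq_zero h0.symm))

lemma gsl_star_dot_self {ι : Type*} [Fintype ι] (v : ι → ℂ) :
    star v ⬝ᵥ v = (gslNsq v : ℂ) := by
  simp only [dotProduct, gslNsq, Pi.star_apply, Complex.star_def]
  push_cast
  exact Finset.sum_congr rfl fun i _ => by rw [Complex.normSq_eq_conj_mul_self]

lemma gsl_dot_eigen {ι : Type*} [Fintype ι] {M : Matrix ι ι ℂ} {v : ι → ℂ} {c : ℝ}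
    (h : M.mulVec v = (c : ℂ) • v) : star v ⬝ᵥ M.mulVec v = (c : ℂ) * gslNsq v := by
  rw [h, dotProduct_smul, gsl_star_dot_self, smul_eq_mul]

lemma gsl_dot_sum {ι κ : Type*} [Fintype ι] (v : ι → ℂ) (s : Finset κ) (f : κ → ι → ℂ) :
    v ⬝ᵥ (∑ j ∈ s, f j) = ∑ j ∈ s, v ⬝ᵥ f j := by
  simp only [dotProduct, Finset.sum_apply, Finset.mul_sum]
  exact Finset.sum_comm

lemma gsl_mulVec_sum {ι κ : Type*} [Fintype ι] (M : Matrix ι ι ℂ) (s : Finset κ)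
    (f : κ → ι → ℂ) : M *ᵥ (∑ j ∈ s, f j) = ∑ j ∈ s, M *ᵥ f j := by
  funext i
  simpa [Matrix.mulVec] using gsl_dot_sum (fun k => M i k) s f

lemma gsl_shift2 {ι : Type*} [Fintype ι] (B C : Matrix ι ι ℂ) (x y : ι → ℂ) :
    star (B *ᵥ x) ⬝ᵥ (C *ᵥ y) = star x ⬝ᵥ ((Bᴴ * C) *ᵥ y) := by
  rw [star_mulVec, dotProduct_mulVec, dotProduct_mulVec, vecMul_vecMul]

/-- the workhorse spectral bound -/
lemma gsl_herm_bound {ι : Type*} [Fintype ι] [DecidableEq ι] {M : Matrix ι ι ℂ}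
    (hM : M.IsHermitian) (μ : ℝ) (v : ι → ℂ)
    (h : ∀ i, μ ≤ hM.eigenvalues i ∨ star (⇑(hM.eigenvectorBasis i)) ⬝ᵥ v = 0) :
    μ * gslNsq v ≤ (star v ⬝ᵥ M.mulVec v).re := by
  classical
  set b := hM.eigenvectorBasis with hb
  set e : ι → ι → ℂ := fun i => ⇑(b i) with he
  set c : ι → ℂ := fun i => star (e i) ⬝ᵥ v with hc
  set v' : EuclideanSpace ℂ ι := (WithLp.equiv 2 _).symm v with hv'
  have hrepr : ∑ i, c i • e i = v := by
    have h := congrArg (⇑(WithLp.equiv 2 _)) (b.sum_repr' v')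
    simpa [hc, he, hv', EuclideanSpace.inner_eq_star_dotProduct, WithLp.ofLp_sum,
      dotProduct_comm] using h
  have hdotv : ∀ i, star v ⬝ᵥ e i = starRingEnd ℂ (c i) := by
    intro i
    simp only [hc, dotProduct, map_sum]
    refine Finset.sum_congr rfl fun k _ => ?_
    simp [Complex.star_def, mul_comm]
  have hMv : M.mulVec v = ∑ i, c i • ((hM.eigenvalues i : ℂ) • e i) := by
    conv_lhs => rw [← hrepr]
    rw [gsl_mulVec_sum]
    refine Finset.sum_congr rfl fun i _ => ?_
    rw [mulVec_smul]
    congr 1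
    rw [show M.mulVec (e i) = M *ᵥ ⇑(b i) from rfl, hM.mulVec_eigenvectorBasis i]
    simp [he, hb, Complex.real_smul]
  have key : ∀ (d : ι → ℂ), star v ⬝ᵥ (∑ i, c i • (d i • e i))
      = ∑ i, d i * Complex.normSq (c i) := by
    intro d
    rw [gsl_dot_sum]
    refine Finset.sum_congr rfl fun i _ => ?_
    rw [dotProduct_smul, dotProduct_smul, hdotv, smul_eq_mul, smul_eq_mul,
      mul_left_comm, Complex.mul_conj]
  have hq : star v ⬝ᵥ M.mulVec v = ∑ i, (hM.eigenvalues i : ℂ) * Complex.normSq (c i) := by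
    rw [hMv]; exact key _
  have hn' : gslNsq v = ∑ i, Complex.normSq (c i) := by
    have hn : (gslNsq v : ℂ) = ∑ i, (Complex.normSq (c i) : ℂ) := by
      have h1 := key (fun _ => 1)
      simp only [one_smul] at h1
      rw [hrepr, gsl_star_dot_self] at h1
      simpa using h1
    have := congrArg Complex.re hn
    simpa using this
  have hq' : (star v ⬝ᵥ M.mulVec v).re = ∑ i, hM.eigenvalues i * Complex.normSq (c i) := by
    rw [hq]; push_cast; simp
  rw [hq', hn', Finset.mul_sum]
  refine Finset.sum_le_sum fun i _ => ?_
  rcases h i with hle | hz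
  · exact mul_le_mul_of_nonneg_right hle (Complex.normSq_nonneg _)
  · have hci : c i = 0 := hz
    simp [hci]

lemma gsl_eigen_is {ι : Type*} [Fintype ι] [DecidableEq ι] {M : Matrix ι ι ℂ}
    (hM : M.IsHermitian) (i : ι) : IsEigenvalue M (hM.eigenvalues i) := by
  refine ⟨⇑(hM.eigenvectorBasis i), ?_, ?_⟩
  · intro h
    exact hM.eigenvectorBasis.orthonormal.ne_zero i
      ((WithLp.equiv 2 _).injective h)
  · rw [hM.mulVec_eigenvectorBasis]
    funext k
    simp [Complex.real_smul]

lemma gsl_least_bound {ι : Type*} [Fintype ι] [DecidableEq ι] {M : Matrix ι ι ℂ}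
    (hM : M.IsHermitian) {μ : ℝ} (hle : ∀ ν : ℝ, IsEigenvalue M ν → μ ≤ ν) (v : ι → ℂ) :
    μ * gslNsq v ≤ (star v ⬝ᵥ M.mulVec v).re :=
  gsl_herm_bound hM μ v (fun i => Or.inl (hle _ (gsl_eigen_is hM i)))

lemma gsl_exists_min {ι : Type*} [Fintype ι] [DecidableEq ι] [Nonempty ι]
    {M : Matrix ι ι ℂ} (hM : M.IsHermitian) :
    ∃ μ : ℝ, IsEigenvalue M μ ∧ ∀ v : ι → ℂ, μ * gslNsq v ≤ (star v ⬝ᵥ M.mulVec v).re := by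
  obtain ⟨i, -, hi⟩ := Finset.exists_mem_eq_inf' (Finset.univ_nonempty (α := ι)) hM.eigenvalues
  refine ⟨Finset.univ.inf' Finset.univ_nonempty hM.eigenvalues, ?_, ?_⟩
  · rw [hi]; exact gsl_eigen_is hM i
  · intro v
    exact gsl_herm_bound hM _ v
      (fun j => Or.inl (Finset.inf'_le _ (Finset.mem_univ j)))

lemma gsl_herm_shift {ι : Type*} [Fintype ι] {M : Matrix ι ι ℂ} (hM : M.IsHermitian)
    (x y : ι → ℂ) : star (M.mulVec x) ⬝ᵥ y = star x ⬝ᵥ M.mulVec y := by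
  rw [star_mulVec, ← dotProduct_mulVec, hM.eq]

lemma gsl_proj_bound {ι : Type*} [Fintype ι] [DecidableEq ι] {HP Proj : Matrix ι ι ℂ}
    (hHP : HP.IsHermitian) (hProjH : Proj.IsHermitian) {p0 p1 : ℝ}
    (hp1 : ∀ ν : ℝ, IsEigenvalue HP ν → ν = p0 ∨ p1 ≤ ν)
    (hProjRange : ∀ w : ι → ℂ, Proj.mulVec w = w ↔ HP.mulVec w = (p0 : ℂ) • w)
    (y : ι → ℂ) (hy : Proj.mulVec y = 0) :
    p1 * gslNsq y ≤ (star y ⬝ᵥ HP.mulVec y).re := by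
  refine gsl_herm_bound hHP p1 y fun i => ?_
  rcases hp1 _ (gsl_eigen_is hHP i) with h0 | h1
  · right
    set e : ι → ℂ := ⇑(hHP.eigenvectorBasis i) with he
    have heeq : HP.mulVec e = (p0 : ℂ) • e := by
      rw [he, hHP.mulVec_eigenvectorBasis, h0]
      funext k
      simp [Complex.real_smul]
    have hPe : Proj.mulVec e = e := (hProjRange e).2 heeq
    calc star e ⬝ᵥ y = star (Proj.mulVec e) ⬝ᵥ y := by rw [hPe]
      _ = star e ⬝ᵥ Proj.mulVec y := gsl_herm_shift hProjH _ _
      _ = 0 := by rw [hy, dotProduct_zero]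
  · left; exact h1

lemma gsl_kron_one_mulVec {α β : Type*} [Fintype α] [Fintype β] [DecidableEq β]
    (M : Matrix α α ℂ) (v : α × β → ℂ) :
    (M ⊗ₖ (1 : Matrix β β ℂ)) *ᵥ v = fun p => M.mulVec (fun k => v (k, p.2)) p.1 := by
  funext p
  simp only [Matrix.mulVec, dotProduct, Fintype.sum_prod_type, kroneckerMap_apply,
    Matrix.one_apply, mul_ite, mul_one, mul_zero, ite_mul, zero_mul, Finset.sum_ite_eq,
    Finset.mem_univ, if_true]

lemma gsl_one_kron_mulVec {α β : Type*} [Fintype α] [Fintype β] [DecidableEq α]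
    (N : Matrix β β ℂ) (v : α × β → ℂ) :
    ((1 : Matrix α α ℂ) ⊗ₖ N) *ᵥ v = fun p => N.mulVec (fun l => v (p.1, l)) p.2 := by
  funext p
  simp only [Matrix.mulVec, dotProduct, Fintype.sum_prod_type, kroneckerMap_apply,
    Matrix.one_apply, mul_ite, mul_one, mul_zero, ite_mul, zero_mul, one_mul,
    Finset.sum_ite_eq, Finset.mem_univ, if_true]
  rw [Finset.sum_comm]
  simp

lemma gsl_nsq_col_sum {α β : Type*} [Fintype α] [Fintype β] (v : α × β → ℂ) :
    gslNsq v = ∑ j : β, gslNsq (fun k => v (k, j)) := by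
  simp only [gslNsq, Fintype.sum_prod_type]
  exact Finset.sum_comm

lemma gsl_nsq_row_sum {α β : Type*} [Fintype α] [Fintype β] (v : α × β → ℂ) :
    gslNsq v = ∑ i : α, gslNsq (fun l => v (i, l)) := by
  simp [gslNsq, Fintype.sum_prod_type]

lemma gsl_kron_one_bound {α β : Type*} [Fintype α] [Fintype β] [DecidableEq β]
    (M : Matrix α α ℂ) (v : α × β → ℂ) (c : ℝ)
    (h : ∀ u : α → ℂ, c * gslNsq u ≤ (star u ⬝ᵥ M.mulVec u).re) :
    c * gslNsq v ≤ (star v ⬝ᵥ (M ⊗ₖ (1 : Matrix β β ℂ)) *ᵥ v).re := by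
  have hd : star v ⬝ᵥ (M ⊗ₖ (1 : Matrix β β ℂ)) *ᵥ v
      = ∑ j : β, star (fun k => v (k, j)) ⬝ᵥ M.mulVec (fun k => v (k, j)) := by
    rw [gsl_kron_one_mulVec]
    simp only [dotProduct, Fintype.sum_prod_type, Pi.star_apply]
    exact Finset.sum_comm
  rw [hd, Complex.re_sum, gsl_nsq_col_sum, Finset.mul_sum]
  exact Finset.sum_le_sum fun j _ => h _

lemma gsl_one_kron_bound {α β : Type*} [Fintype α] [Fintype β] [DecidableEq α]
    (N : Matrix β β ℂ) (v : α × β → ℂ) (c : ℝ)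
    (h : ∀ i : α, c * gslNsq (fun l => v (i, l))
      ≤ (star (fun l => v (i, l)) ⬝ᵥ N.mulVec (fun l => v (i, l))).re) :
    c * gslNsq v ≤ (star v ⬝ᵥ ((1 : Matrix α α ℂ) ⊗ₖ N) *ᵥ v).re := by
  have hd : star v ⬝ᵥ ((1 : Matrix α α ℂ) ⊗ₖ N) *ᵥ v
      = ∑ i : α, star (fun l => v (i, l)) ⬝ᵥ N.mulVec (fun l => v (i, l)) := by
    rw [gsl_one_kron_mulVec]
    simp only [dotProduct, Fintype.sum_prod_type, Pi.star_apply]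
  rw [hd, Complex.re_sum, gsl_nsq_row_sum, Finset.mul_sum]
  exact Finset.sum_le_sum fun i _ => h i

lemma gsl_kron_conjTranspose {α β : Type*} [Fintype α] [Fintype β]
    (M : Matrix α α ℂ) (N : Matrix β β ℂ) : (M ⊗ₖ N)ᴴ = Mᴴ ⊗ₖ Nᴴ := by
  ext p q
  simp [conjTranspose_apply, kroneckerMap_apply, mul_comm]

end GSAux


/-- given Hermitian `H_S`, Hermitian `H_P` with least eigenvalue `p0` and
second-smallest distinct eigenvalue `p1`, `Π` the orthogonal projection onto the
`p0`-eigenspace of `H_P`, and Hermitian `A` commuting with `H_S` whose least eigenvalue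
`a_min` satisfies `a_min + p1 - p0 > 0`, a vector `ψ` is a ground state of
`H1 = H_S ⊗ I + I ⊗ H_P` iff it is a ground state of `H2 = H1 + A ⊗ (I - Π)`. -/
theorem ground_state_lemma {n m : ℕ}
    (HS : Matrix (Fin n) (Fin n) ℂ) (HP : Matrix (Fin m) (Fin m) ℂ)
    (Proj : Matrix (Fin m) (Fin m) ℂ) (A : Matrix (Fin n) (Fin n) ℂ)
    (p0 p1 amin : ℝ)
    (hHS : HS.IsHermitian) (hHP : HP.IsHermitian) (hA : A.IsHermitian)
    (hAcomm : A * HS = HS * A)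
    -- `p0` is the least eigenvalue of `H_P`
    (hp0 : IsLeastEigenvalue HP p0)
    -- `p1` is the second-smallest distinct eigenvalue of `H_P`
    (hp1ev : IsEigenvalue HP p1) (hp01 : p0 < p1)
    (hp1 : ∀ ν : ℝ, IsEigenvalue HP ν → ν = p0 ∨ p1 ≤ ν)
    -- `Proj` is the orthogonal projection onto the `p0`-eigenspace of `H_P`
    (hProjH : Proj.IsHermitian) (hProj2 : Proj * Proj = Proj)
    (hProjRange : ∀ w : Fin m → ℂ, Proj.mulVec w = w ↔ HP.mulVec w = (p0 : ℂ) • w)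
    -- `amin` is the least eigenvalue of `A` and the gap condition holds
    (hamin : IsLeastEigenvalue A amin)
    (hgap : amin + p1 - p0 > 0)
    -- `l1` and `l2` are the least eigenvalues of `H1` and `H2` respectively
    (l1 l2 : ℝ)
    (hl1 : IsLeastEigenvalue
      (HS ⊗ₖ (1 : Matrix (Fin m) (Fin m) ℂ) + (1 : Matrix (Fin n) (Fin n) ℂ) ⊗ₖ HP) l1)
    (hl2 : IsLeastEigenvalue
      (HS ⊗ₖ (1 : Matrix (Fin m) (Fin m) ℂ) + (1 : Matrix (Fin n) (Fin n) ℂ) ⊗ₖ HP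
        + A ⊗ₖ ((1 : Matrix (Fin m) (Fin m) ℂ) - Proj)) l2)
    (ψ : Fin n × Fin m → ℂ) (hψ : ψ ≠ 0) :
    (HS ⊗ₖ (1 : Matrix (Fin m) (Fin m) ℂ)
        + (1 : Matrix (Fin n) (Fin n) ℂ) ⊗ₖ HP).mulVec ψ = (l1 : ℂ) • ψ ↔
    (HS ⊗ₖ (1 : Matrix (Fin m) (Fin m) ℂ) + (1 : Matrix (Fin n) (Fin n) ℂ) ⊗ₖ HP
        + A ⊗ₖ ((1 : Matrix (Fin m) (Fin m) ℂ) - Proj)).mulVec ψ = (l2 : ℂ) • ψ := by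
  classical
  obtain ⟨pp, hpp⟩ : ∃ p, ψ p ≠ 0 := by
    by_contra h
    push_neg at h
    exact hψ (funext h)
  haveI : Nonempty (Fin n) := ⟨pp.1⟩
  haveI : Nonempty (Fin m) := ⟨pp.2⟩
  set Q : Matrix (Fin m) (Fin m) ℂ := (1 : Matrix (Fin m) (Fin m) ℂ) - Proj with hQdef
  set H1 : Matrix (Fin n × Fin m) (Fin n × Fin m) ℂ :=
    HS ⊗ₖ (1 : Matrix (Fin m) (Fin m) ℂ) + (1 : Matrix (Fin n) (Fin n) ℂ) ⊗ₖ HP with hH1def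
  -- basic projection algebra
  have hQH : Qᴴ = Q := by
    rw [hQdef, conjTranspose_sub, conjTranspose_one, hProjH.eq]
  have hPQ : Proj * Q = 0 := by
    rw [hQdef, Matrix.mul_sub, Matrix.mul_one, hProj2, sub_self]
  have hQP : Q * Proj = 0 := by
    rw [hQdef, Matrix.sub_mul, Matrix.one_mul, hProj2, sub_self]
  have hQQ : Q * Q = Q := by
    rw [hQdef, Matrix.sub_mul, Matrix.one_mul, Matrix.mul_sub, Matrix.mul_one, hProj2,
      sub_self, sub_zero]
  have hProjCols : ∀ j, Proj.mulVec (fun k => Proj k j) = fun k => Proj k j := by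
    intro j
    funext i
    have := congrFun (congrFun hProj2 i) j
    simpa [Matrix.mul_apply, Matrix.mulVec, dotProduct] using this
  have hHPProj : HP * Proj = (p0 : ℂ) • Proj := by
    ext i j
    have h1 := (hProjRange (fun k => Proj k j)).1 (hProjCols j)
    have h2 := congrFun h1 i
    simpa [Matrix.mul_apply, Matrix.mulVec, dotProduct, Pi.smul_apply, smul_eq_mul] using h2
  have hProjHP : Proj * HP = (p0 : ℂ) • Proj := by
    have h := congrArg conjTranspose hHPProj
    rwa [conjTranspose_mul, hHP.eq, hProjH.eq, conjTranspose_smul, hProjH.eq,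
      Complex.star_def, Complex.conj_ofReal] at h
  -- kronecker projections
  set Pt : Matrix (Fin n × Fin m) (Fin n × Fin m) ℂ :=
    (1 : Matrix (Fin n) (Fin n) ℂ) ⊗ₖ Proj with hPtdef
  set Qt : Matrix (Fin n × Fin m) (Fin n × Fin m) ℂ :=
    (1 : Matrix (Fin n) (Fin n) ℂ) ⊗ₖ Q with hQtdef
  have hPtH : Ptᴴ = Pt := by
    rw [hPtdef, gsl_kron_conjTranspose, conjTranspose_one, hProjH.eq]
  have hQtH : Qtᴴ = Qt := by
    rw [hQtdef, gsl_kron_conjTranspose, conjTranspose_one, hQH]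
  have hPtQt : Pt * Qt = 0 := by
    rw [hPtdef, hQtdef, ← Matrix.mul_kronecker_mul, Matrix.one_mul, hPQ, kronecker_zero]
  have hQtPt : Qt * Pt = 0 := by
    rw [hPtdef, hQtdef, ← Matrix.mul_kronecker_mul, Matrix.one_mul, hQP, kronecker_zero]
  have hPtQt1 : Pt + Qt = 1 := by
    rw [hPtdef, hQtdef, ← Matrix.kronecker_add]
    have h : Proj + Q = 1 := by rw [hQdef]; abel
    rw [h, Matrix.one_kronecker_one]
  have hPtH1Qt : Pt * H1 * Qt = 0 := by
    rw [hH1def, hPtdef, hQtdef, Matrix.mul_add, Matrix.add_mul]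
    simp only [← Matrix.mul_kronecker_mul, Matrix.one_mul, Matrix.mul_one]
    rw [hPQ, hProjHP, Matrix.smul_mul, hPQ]
    simp only [smul_zero, kronecker_zero, add_zero]
  have hQtH1Pt : Qt * H1 * Pt = 0 := by
    rw [hH1def, hPtdef, hQtdef, Matrix.mul_add, Matrix.add_mul]
    simp only [← Matrix.mul_kronecker_mul, Matrix.one_mul, Matrix.mul_one]
    rw [hQP, Matrix.mul_assoc Q HP Proj, hHPProj, Matrix.mul_smul, hQP]
    simp only [smul_zero, kronecker_zero, add_zero]
  have hAQfact : A ⊗ₖ Q = (A ⊗ₖ (1 : Matrix (Fin m) (Fin m) ℂ)) * Qt := by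
    rw [hQtdef, ← Matrix.mul_kronecker_mul, Matrix.mul_one, Matrix.one_mul]
  have hAQfact2 : A ⊗ₖ Q = Qt * (A ⊗ₖ (1 : Matrix (Fin m) (Fin m) ℂ)) * Qt := by
    rw [hQtdef]
    simp only [← Matrix.mul_kronecker_mul, Matrix.one_mul, Matrix.mul_one]
    rw [hQQ]
  -- decomposition identities
  have hsum : ∀ χ : Fin n × Fin m → ℂ, χ = Pt *ᵥ χ + Qt *ᵥ χ := by
    intro χ
    rw [← Matrix.add_mulVec, hPtQt1, Matrix.one_mulVec]
  have hnsqsplit : ∀ χ : Fin n × Fin m → ℂ,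
      gslNsq χ = gslNsq (Pt *ᵥ χ) + gslNsq (Qt *ᵥ χ) := by
    intro χ
    have hc1 : star (Pt *ᵥ χ) ⬝ᵥ (Qt *ᵥ χ) = 0 := by
      rw [gsl_shift2, hPtH, hPtQt, Matrix.zero_mulVec, dotProduct_zero]
    have hc2 : star (Qt *ᵥ χ) ⬝ᵥ (Pt *ᵥ χ) = 0 := by
      rw [gsl_shift2, hQtH, hQtPt, Matrix.zero_mulVec, dotProduct_zero]
    have hcx : (gslNsq χ : ℂ) = (gslNsq (Pt *ᵥ χ) : ℂ) + (gslNsq (Qt *ᵥ χ) : ℂ) := by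
      rw [← gsl_star_dot_self, ← gsl_star_dot_self, ← gsl_star_dot_self]
      conv_lhs => rw [hsum χ]
      rw [star_add, add_dotProduct, dotProduct_add, dotProduct_add, hc1, hc2]
      ring
    exact_mod_cast hcx
  have hqsplit : ∀ χ : Fin n × Fin m → ℂ, star χ ⬝ᵥ H1 *ᵥ χ
      = star (Pt *ᵥ χ) ⬝ᵥ H1 *ᵥ (Pt *ᵥ χ) + star (Qt *ᵥ χ) ⬝ᵥ H1 *ᵥ (Qt *ᵥ χ) := by
    intro χ
    have hc1 : star (Pt *ᵥ χ) ⬝ᵥ H1 *ᵥ (Qt *ᵥ χ) = 0 := by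
      rw [Matrix.mulVec_mulVec, gsl_shift2, hPtH, ← Matrix.mul_assoc, hPtH1Qt,
        Matrix.zero_mulVec, dotProduct_zero]
    have hc2 : star (Qt *ᵥ χ) ⬝ᵥ H1 *ᵥ (Pt *ᵥ χ) = 0 := by
      rw [Matrix.mulVec_mulVec, gsl_shift2, hQtH, ← Matrix.mul_assoc, hQtH1Pt,
        Matrix.zero_mulVec, dotProduct_zero]
    conv_lhs => rw [hsum χ]
    rw [star_add, add_dotProduct, Matrix.mulVec_add, dotProduct_add, dotProduct_add, hc1, hc2]
    ring
  have hAQsplit : ∀ χ : Fin n × Fin m → ℂ, star χ ⬝ᵥ (A ⊗ₖ Q) *ᵥ χ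
      = star (Qt *ᵥ χ) ⬝ᵥ (A ⊗ₖ (1 : Matrix (Fin m) (Fin m) ℂ)) *ᵥ (Qt *ᵥ χ) := by
    intro χ
    rw [Matrix.mulVec_mulVec, gsl_shift2, hQtH, ← Matrix.mul_assoc, ← hAQfact2]
  have hAQmv : ∀ χ : Fin n × Fin m → ℂ,
      (A ⊗ₖ Q) *ᵥ χ = (A ⊗ₖ (1 : Matrix (Fin m) (Fin m) ℂ)) *ᵥ (Qt *ᵥ χ) := by
    intro χ
    rw [Matrix.mulVec_mulVec, ← hAQfact]
  have hrows : ∀ (χ : Fin n × Fin m → ℂ) (i : Fin n),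
      Proj *ᵥ (fun l => (Qt *ᵥ χ) (i, l)) = 0 := by
    intro χ i
    have h : (fun l => (Qt *ᵥ χ) (i, l)) = Q *ᵥ (fun l => χ (i, l)) := by
      funext l
      simp only [hQtdef, gsl_one_kron_mulVec]
    rw [h, Matrix.mulVec_mulVec, hPQ, Matrix.zero_mulVec]
  -- scalar bounds
  obtain ⟨s0, hs0ev, hs0bd⟩ := gsl_exists_min hHS
  have hHPbd : ∀ y : Fin m → ℂ, p0 * gslNsq y ≤ (star y ⬝ᵥ HP.mulVec y).re :=
    fun y => gsl_least_bound hHP hp0.2 y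
  have hAbd : ∀ x : Fin n → ℂ, amin * gslNsq x ≤ (star x ⬝ᵥ A.mulVec x).re :=
    fun x => gsl_least_bound hA hamin.2 x
  have hH1u : ∀ χ : Fin n × Fin m → ℂ,
      (s0 + p0) * gslNsq χ ≤ (star χ ⬝ᵥ H1 *ᵥ χ).re := by
    intro χ
    have h1 := gsl_kron_one_bound HS χ s0 hs0bd
    have h2 := gsl_one_kron_bound HP χ p0 (fun i => hHPbd _)
    have e : (star χ ⬝ᵥ H1 *ᵥ χ).re
        = (star χ ⬝ᵥ (HS ⊗ₖ (1 : Matrix (Fin m) (Fin m) ℂ)) *ᵥ χ).re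
          + (star χ ⬝ᵥ ((1 : Matrix (Fin n) (Fin n) ℂ) ⊗ₖ HP) *ᵥ χ).re := by
      rw [hH1def, Matrix.add_mulVec, dotProduct_add, Complex.add_re]
    rw [e]
    nlinarith [gslNsq_nonneg χ]
  have hH1w : ∀ χ : Fin n × Fin m → ℂ, (∀ i, Proj *ᵥ (fun l => χ (i, l)) = 0) →
      (s0 + p1) * gslNsq χ ≤ (star χ ⬝ᵥ H1 *ᵥ χ).re := by
    intro χ hχ
    have h1 := gsl_kron_one_bound HS χ s0 hs0bd
    have h2 := gsl_one_kron_bound HP χ p1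
      (fun i => gsl_proj_bound hHP hProjH hp1 hProjRange _ (hχ i))
    have e : (star χ ⬝ᵥ H1 *ᵥ χ).re
        = (star χ ⬝ᵥ (HS ⊗ₖ (1 : Matrix (Fin m) (Fin m) ℂ)) *ᵥ χ).re
          + (star χ ⬝ᵥ ((1 : Matrix (Fin n) (Fin n) ℂ) ⊗ₖ HP) *ᵥ χ).re := by
      rw [hH1def, Matrix.add_mulVec, dotProduct_add, Complex.add_re]
    rw [e]
    nlinarith [gslNsq_nonneg χ]
  have hAw : ∀ χ : Fin n × Fin m → ℂ,
      amin * gslNsq χ ≤ (star χ ⬝ᵥ (A ⊗ₖ (1 : Matrix (Fin m) (Fin m) ℂ)) *ᵥ χ).re :=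
    fun χ => gsl_kron_one_bound A χ amin hAbd
  -- global lower bound for H2
  have hH2glob : ∀ χ : Fin n × Fin m → ℂ,
      (s0 + p0) * gslNsq χ ≤ (star χ ⬝ᵥ (H1 + A ⊗ₖ Q) *ᵥ χ).re := by
    intro χ
    have e1 : (star χ ⬝ᵥ (H1 + A ⊗ₖ Q) *ᵥ χ).re
        = (star (Pt *ᵥ χ) ⬝ᵥ H1 *ᵥ (Pt *ᵥ χ)).re + (star (Qt *ᵥ χ) ⬝ᵥ H1 *ᵥ (Qt *ᵥ χ)).re
          + (star (Qt *ᵥ χ) ⬝ᵥ (A ⊗ₖ (1 : Matrix (Fin m) (Fin m) ℂ)) *ᵥ (Qt *ᵥ χ)).re := by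
      rw [Matrix.add_mulVec, dotProduct_add, Complex.add_re, hqsplit χ, Complex.add_re,
        hAQsplit χ]
    have b1 := hH1u (Pt *ᵥ χ)
    have b2 := hH1w (Qt *ᵥ χ) (hrows χ)
    have b3 := hAw (Qt *ᵥ χ)
    have hb := hnsqsplit χ
    have hnn := gslNsq_nonneg (Qt *ᵥ χ)
    rw [e1, hb]
    nlinarith [mul_nonneg hgap.le hnn]
  -- the least eigenvalues equal s0 + p0
  have hl1ge : s0 + p0 ≤ l1 := by
    obtain ⟨v, hv0, hveq⟩ := hl1.1
    have hq := gsl_dot_eigen hveq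
    have hre : (star v ⬝ᵥ H1 *ᵥ v).re = l1 * gslNsq v := by
      rw [hq, ← Complex.ofReal_mul, Complex.ofReal_re]
    have hbd := hH1u v
    rw [hre] at hbd
    exact le_of_mul_le_mul_right hbd (gslNsq_pos hv0)
  have hl2ge : s0 + p0 ≤ l2 := by
    obtain ⟨v, hv0, hveq⟩ := hl2.1
    have hq := gsl_dot_eigen hveq
    have hre : (star v ⬝ᵥ (H1 + A ⊗ₖ Q) *ᵥ v).re = l2 * gslNsq v := by
      rw [hq, ← Complex.ofReal_mul, Complex.ofReal_re]
    have hbd := hH2glob v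
    rw [hre] at hbd
    exact le_of_mul_le_mul_right hbd (gslNsq_pos hv0)
  obtain ⟨x, hx0, hxeq⟩ := hs0ev
  obtain ⟨y, hy0, hyeq⟩ := hp0.1
  have hPy : Proj *ᵥ y = y := (hProjRange y).2 hyeq
  have hQy : Q *ᵥ y = 0 := by
    rw [hQdef, Matrix.sub_mulVec, Matrix.one_mulVec, hPy, sub_self]
  set φ0 : Fin n × Fin m → ℂ := fun p => x p.1 * y p.2 with hφ0def
  have hφ0ne : φ0 ≠ 0 := by
    obtain ⟨i, hi⟩ : ∃ i, x i ≠ 0 := by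
      by_contra h; push_neg at h; exact hx0 (funext h)
    obtain ⟨j, hj⟩ : ∃ j, y j ≠ 0 := by
      by_contra h; push_neg at h; exact hy0 (funext h)
    intro h
    exact (mul_ne_zero hi hj) (by simpa [hφ0def] using congrFun h (i, j))
  have hcol : ∀ j : Fin m, (fun k => φ0 (k, j)) = y j • x := by
    intro j; funext k; simp [hφ0def, mul_comm]
  have hrow : ∀ i : Fin n, (fun l => φ0 (i, l)) = x i • y := by
    intro i; funext l; simp [hφ0def]
  have hH1φ0 : H1 *ᵥ φ0 = ((s0 + p0 : ℝ) : ℂ) • φ0 := by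
    rw [hH1def, Matrix.add_mulVec, gsl_kron_one_mulVec, gsl_one_kron_mulVec]
    funext p
    simp only [Pi.add_apply]
    rw [hcol p.2, hrow p.1, Matrix.mulVec_smul, Matrix.mulVec_smul, hxeq, hyeq]
    simp only [Pi.smul_apply, smul_eq_mul, hφ0def]
    push_cast
    ring
  have hAQφ0 : (A ⊗ₖ Q) *ᵥ φ0 = 0 := by
    rw [hAQmv]
    have hz : Qt *ᵥ φ0 = 0 := by
      rw [hQtdef, gsl_one_kron_mulVec]
      funext p
      rw [hrow p.1, Matrix.mulVec_smul, hQy]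
      simp
    rw [hz, Matrix.mulVec_zero]
  have hl1le : l1 ≤ s0 + p0 := hl1.2 _ ⟨φ0, hφ0ne, hH1φ0⟩
  have hl2le : l2 ≤ s0 + p0 := hl2.2 _ ⟨φ0, hφ0ne, by
    rw [Matrix.add_mulVec, hH1φ0, hAQφ0, add_zero]⟩
  have hl1v : l1 = s0 + p0 := le_antisymm hl1le hl1ge
  have hl2v : l2 = s0 + p0 := le_antisymm hl2le hl2ge
  -- the main equivalence
  constructor
  · intro hev
    have hqc : star ψ ⬝ᵥ H1 *ᵥ ψ = (l1 : ℂ) * gslNsq ψ := gsl_dot_eigen hev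
    have hqre : (star ψ ⬝ᵥ H1 *ᵥ ψ).re = l1 * gslNsq ψ := by
      rw [hqc, ← Complex.ofReal_mul, Complex.ofReal_re]
    have hsplitre : (star ψ ⬝ᵥ H1 *ᵥ ψ).re
        = (star (Pt *ᵥ ψ) ⬝ᵥ H1 *ᵥ (Pt *ᵥ ψ)).re
          + (star (Qt *ᵥ ψ) ⬝ᵥ H1 *ᵥ (Qt *ᵥ ψ)).re := by
      rw [hqsplit ψ, Complex.add_re]
    have b1 := hH1u (Pt *ᵥ ψ)
    have b2 := hH1w (Qt *ᵥ ψ) (hrows ψ)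
    have hb := hnsqsplit ψ
    have hw0 : gslNsq (Qt *ᵥ ψ) = 0 := by
      have hineq : (p1 - p0) * gslNsq (Qt *ᵥ ψ) ≤ 0 := by
        rw [hl1v, hb] at hqre
        nlinarith [hqre, hsplitre, b1, b2]
      have hnn := mul_nonneg (sub_pos.2 hp01).le (gslNsq_nonneg (Qt *ᵥ ψ))
      have h0 : (p1 - p0) * gslNsq (Qt *ᵥ ψ) = 0 := le_antisymm hineq hnn
      rcases mul_eq_zero.1 h0 with h | h
      · exact absurd h (by linarith)
      · exact h
    have hwz : Qt *ᵥ ψ = 0 := gslNsq_eq_zero hw0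
    have hAQψ : (A ⊗ₖ Q) *ᵥ ψ = 0 := by
      rw [hAQmv, hwz, Matrix.mulVec_zero]
    rw [Matrix.add_mulVec, hev, hAQψ, add_zero, hl1v, hl2v]
  · intro hev
    have hqc : star ψ ⬝ᵥ (H1 + A ⊗ₖ Q) *ᵥ ψ = (l2 : ℂ) * gslNsq ψ := gsl_dot_eigen hev
    have hqre : (star ψ ⬝ᵥ (H1 + A ⊗ₖ Q) *ᵥ ψ).re = l2 * gslNsq ψ := by
      rw [hqc, ← Complex.ofReal_mul, Complex.ofReal_re]
    have hsplitre : (star ψ ⬝ᵥ (H1 + A ⊗ₖ Q) *ᵥ ψ).re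
        = (star (Pt *ᵥ ψ) ⬝ᵥ H1 *ᵥ (Pt *ᵥ ψ)).re
          + (star (Qt *ᵥ ψ) ⬝ᵥ H1 *ᵥ (Qt *ᵥ ψ)).re
          + (star (Qt *ᵥ ψ) ⬝ᵥ (A ⊗ₖ (1 : Matrix (Fin m) (Fin m) ℂ)) *ᵥ (Qt *ᵥ ψ)).re := by
      rw [Matrix.add_mulVec, dotProduct_add, Complex.add_re, hqsplit ψ, Complex.add_re,
        hAQsplit ψ]
    have b1 := hH1u (Pt *ᵥ ψ)
    have b2 := hH1w (Qt *ᵥ ψ) (hrows ψ)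
    have b3 := hAw (Qt *ᵥ ψ)
    have hb := hnsqsplit ψ
    have hw0 : gslNsq (Qt *ᵥ ψ) = 0 := by
      have hineq : (amin + p1 - p0) * gslNsq (Qt *ᵥ ψ) ≤ 0 := by
        rw [hl2v, hb] at hqre
        nlinarith [hqre, hsplitre, b1, b2, b3]
      have hnn := mul_nonneg hgap.le (gslNsq_nonneg (Qt *ᵥ ψ))
      have h0 : (amin + p1 - p0) * gslNsq (Qt *ᵥ ψ) = 0 := le_antisymm hineq hnn
      rcases mul_eq_zero.1 h0 with h | h
      · exact absurd h (by linarith)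
      · exact h
    have hwz : Qt *ᵥ ψ = 0 := gslNsq_eq_zero hw0
    have hAQψ : (A ⊗ₖ Q) *ᵥ ψ = 0 := by
      rw [hAQmv, hwz, Matrix.mulVec_zero]
    rw [Matrix.add_mulVec, hAQψ, add_zero] at hev
    rw [hev, hl1v, hl2v]
end

section
/- Let H_S be an n×n complex Hermitian matrix with least eigenvalue s0, H_P an m×m complex Hermitian matrix with least eigenvalue p0, Π the orthogonal projection onto the p0-eigenspace of H_P, and A an n×n Hermitian positive semidefinite matrix with A·H_S = H_S·A. Set H2 = H_S ⊗ I_m + I_n ⊗ H_P + A ⊗ (I_m − Π). Then the least eigenvalue of H2 equals s0 + p0, and every vector of the form v ⊗ w, where H_S v = s0 v and H_P w = p0 w, satisfies H2 (v ⊗ w) = (s0 + p0)(v ⊗ w). -/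
open Matrix Kronecker
open scoped ComplexOrder

/-- The Kronecker (tensor) product of two vectors. -/
def vecKron {K L : Type*} (v : K → ℂ) (w : L → ℂ) : K × L → ℂ :=
  fun p => v p.1 * w p.2

lemma kron_conjTranspose {l m p q : Type*} (A : Matrix l m ℂ) (B : Matrix p q ℂ) :
    (A ⊗ₖ B)ᴴ = Aᴴ ⊗ₖ Bᴴ := by
  ext ⟨i, j⟩ ⟨k, l⟩
  simp [conjTranspose_apply, kroneckerMap_apply, mul_comm]

lemma posSemidef_kron {n m : ℕ} {A : Matrix (Fin n) (Fin n) ℂ} {B : Matrix (Fin m) (Fin m) ℂ}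
    (hA : A.PosSemidef) (hB : B.PosSemidef) : (A ⊗ₖ B).PosSemidef := by
  exact hA.kronecker hB

lemma kron_mulVec {n m : ℕ} (A : Matrix (Fin n) (Fin n) ℂ) (B : Matrix (Fin m) (Fin m) ℂ)
    (v : Fin n → ℂ) (w : Fin m → ℂ) :
    (A ⊗ₖ B).mulVec (vecKron v w) = vecKron (A.mulVec v) (B.mulVec w) := by
  ext ⟨i, j⟩
  simp only [mulVec, dotProduct, vecKron, kroneckerMap_apply, Fintype.sum_prod_type]
  rw [Finset.sum_mul_sum]
  exact Finset.sum_congr rfl fun k _ => Finset.sum_congr rfl fun l _ => by ring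

lemma sub_kron {n m : ℕ} (A B : Matrix (Fin n) (Fin n) ℂ) (C : Matrix (Fin m) (Fin m) ℂ) :
    (A - B) ⊗ₖ C = A ⊗ₖ C - B ⊗ₖ C := by
  ext ⟨i, j⟩ ⟨k, l⟩
  simp [kroneckerMap_apply, sub_mul]

lemma kron_sub {n m : ℕ} (A : Matrix (Fin n) (Fin n) ℂ) (B C : Matrix (Fin m) (Fin m) ℂ) :
    A ⊗ₖ (B - C) = A ⊗ₖ B - A ⊗ₖ C := by
  ext ⟨i, j⟩ ⟨k, l⟩
  simp [kroneckerMap_apply, mul_sub]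

lemma star_dot_eq {K : Type*} [Fintype K] (x : K → ℂ) :
    star x ⬝ᵥ x = ((∑ i, Complex.normSq (x i) : ℝ) : ℂ) := by
  simp only [dotProduct, Pi.star_apply, Complex.star_def]
  push_cast
  exact Finset.sum_congr rfl fun i _ => by
    rw [mul_comm, Complex.mul_conj]

lemma eig_ge_of_psd {K : Type*} [Fintype K] [DecidableEq K] {M : Matrix K K ℂ} {c ν : ℝ}
    (h : (M - (c : ℂ) • 1).PosSemidef) (hν : IsEigenvalue M ν) : c ≤ ν := by
  obtain ⟨x, hx0, hx⟩ := hν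
  have hmv : (M - (c : ℂ) • 1).mulVec x = (((ν - c : ℝ)) : ℂ) • x := by
    rw [Matrix.sub_mulVec, hx, Matrix.smul_mulVec, Matrix.one_mulVec]
    push_cast
    module
  have h2 := h.dotProduct_mulVec_nonneg x
  rw [hmv, dotProduct_smul, star_dot_eq] at h2
  set r : ℝ := ∑ i, Complex.normSq (x i) with hr
  have hrpos : 0 < r := by
    obtain ⟨i, hi⟩ := Function.ne_iff.mp hx0
    exact Finset.sum_pos' (fun j _ => Complex.normSq_nonneg _)
      ⟨i, Finset.mem_univ i, by simpa using Complex.normSq_pos.mpr hi⟩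
  have : (0 : ℂ) ≤ (((ν - c) * r : ℝ) : ℂ) := by
    push_cast
    simpa [smul_eq_mul] using h2
  have := Complex.zero_le_real.mp this
  nlinarith

lemma psd_sub_of_least {k : ℕ} {M : Matrix (Fin k) (Fin k) ℂ} {s : ℝ}
    (hM : M.IsHermitian) (hs : IsLeastEigenvalue M s) :
    (M - (s : ℂ) • 1).PosSemidef := by
  have hM' : (M - (s : ℂ) • 1).IsHermitian := by
    refine hM.sub ?_
    unfold Matrix.IsHermitian
    rw [conjTranspose_smul, conjTranspose_one]
    norm_num
  refine hM'.posSemidef_iff_eigenvalues_nonneg.mpr fun i => show (0:ℝ) ≤ hM'.eigenvalues i from ?_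
  set u : Fin k → ℂ := ⇑(hM'.eigenvectorBasis i) with hu
  have hmv := hM'.mulVec_eigenvectorBasis i
  have hune : u ≠ 0 := by
    intro h
    exact hM'.eigenvectorBasis.orthonormal.ne_zero i (by ext j; exact congrFun h j)
  have hmv' : (M - (s:ℂ) • 1).mulVec u = hM'.eigenvalues i • u := hmv
  have heig : IsEigenvalue M (s + hM'.eigenvalues i) := by
    refine ⟨u, hune, ?_⟩
    have : M.mulVec u = (M - (s:ℂ) • 1).mulVec u + (s:ℂ) • u := by
      rw [Matrix.sub_mulVec, Matrix.smul_mulVec, Matrix.one_mulVec]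
      module
    rw [this, hmv']
    push_cast
    ext j
    simp only [Pi.add_apply, Pi.smul_apply, smul_eq_mul, Complex.real_smul]
    ring
  have := hs.2 _ heig
  linarith

/-- for Hermitian `H_S` with least eigenvalue `s0`, Hermitian `H_P` with least
eigenvalue `p0`, `Π` the orthogonal projection onto the `p0`-eigenspace of `H_P`, and `A`
positive semidefinite commuting with `H_S`, the matrix
`H2 = H_S ⊗ I + I ⊗ H_P + A ⊗ (I - Π)` has least eigenvalue `s0 + p0`, attained on every
`v ⊗ w` with `H_S v = s0 v` and `H_P w = p0 w`. -/
theorem least_eigenvalue_H2 {n m : ℕ}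
    (HS : Matrix (Fin n) (Fin n) ℂ) (HP : Matrix (Fin m) (Fin m) ℂ)
    (Proj : Matrix (Fin m) (Fin m) ℂ) (A : Matrix (Fin n) (Fin n) ℂ)
    (s0 p0 : ℝ)
    (hHS : HS.IsHermitian) (hHP : HP.IsHermitian)
    (hs0 : IsLeastEigenvalue HS s0) (hp0 : IsLeastEigenvalue HP p0)
    -- `Proj` is the orthogonal projection onto the `p0`-eigenspace of `H_P`
    (hProjH : Proj.IsHermitian) (hProj2 : Proj * Proj = Proj)
    (hProjRange : ∀ w : Fin m → ℂ, Proj.mulVec w = w ↔ HP.mulVec w = (p0 : ℂ) • w)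
    -- `A` is Hermitian positive semidefinite and commutes with `H_S`
    (hA : A.PosSemidef) (hAcomm : A * HS = HS * A) :
    IsLeastEigenvalue
      (HS ⊗ₖ (1 : Matrix (Fin m) (Fin m) ℂ) + (1 : Matrix (Fin n) (Fin n) ℂ) ⊗ₖ HP
        + A ⊗ₖ ((1 : Matrix (Fin m) (Fin m) ℂ) - Proj)) (s0 + p0) ∧
    ∀ (v : Fin n → ℂ) (w : Fin m → ℂ),
      HS.mulVec v = (s0 : ℂ) • v → HP.mulVec w = (p0 : ℂ) • w →
      (HS ⊗ₖ (1 : Matrix (Fin m) (Fin m) ℂ) + (1 : Matrix (Fin n) (Fin n) ℂ) ⊗ₖ HP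
        + A ⊗ₖ ((1 : Matrix (Fin m) (Fin m) ℂ) - Proj)).mulVec (vecKron v w)
        = ((s0 + p0 : ℝ) : ℂ) • vecKron v w := by
  have hpart2 : ∀ (v : Fin n → ℂ) (w : Fin m → ℂ),
      HS.mulVec v = (s0 : ℂ) • v → HP.mulVec w = (p0 : ℂ) • w →
      (HS ⊗ₖ (1 : Matrix (Fin m) (Fin m) ℂ) + (1 : Matrix (Fin n) (Fin n) ℂ) ⊗ₖ HP
        + A ⊗ₖ ((1 : Matrix (Fin m) (Fin m) ℂ) - Proj)).mulVec (vecKron v w)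
        = ((s0 + p0 : ℝ) : ℂ) • vecKron v w := by
    intro v w hv hw
    have hPw : Proj.mulVec w = w := (hProjRange w).mpr hw
    have h3 : ((1 : Matrix (Fin m) (Fin m) ℂ) - Proj).mulVec w = 0 := by
      rw [Matrix.sub_mulVec, Matrix.one_mulVec, hPw, sub_self]
    rw [Matrix.add_mulVec, Matrix.add_mulVec, kron_mulVec, kron_mulVec, kron_mulVec,
      Matrix.one_mulVec, Matrix.one_mulVec, hv, hw, h3]
    ext ⟨i, j⟩
    simp only [Pi.add_apply, Pi.smul_apply, vecKron, smul_eq_mul, Pi.zero_apply, mul_zero]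
    push_cast
    ring
  refine ⟨⟨?_, ?_⟩, hpart2⟩
  · obtain ⟨v, hv0, hv⟩ := hs0.1
    obtain ⟨w, hw0, hw⟩ := hp0.1
    refine ⟨vecKron v w, ?_, hpart2 v w hv hw⟩
    obtain ⟨i, hi⟩ := Function.ne_iff.mp hv0
    obtain ⟨j, hj⟩ := Function.ne_iff.mp hw0
    exact Function.ne_iff.mpr ⟨(i, j), mul_ne_zero hi hj⟩
  · intro ν hν
    refine eig_ge_of_psd ?_ hν
    have hpsd1 := psd_sub_of_least hHS hs0
    have hpsd2 := psd_sub_of_least hHP hp0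
    have hIP : ((1 : Matrix (Fin m) (Fin m) ℂ) - Proj).PosSemidef := by
      have h1 : ((1 : Matrix (Fin m) (Fin m) ℂ) - Proj)ᴴ = 1 - Proj := by
        rw [conjTranspose_sub, conjTranspose_one, hProjH.eq]
      have h2 : ((1 : Matrix (Fin m) (Fin m) ℂ) - Proj)
          = ((1 : Matrix (Fin m) (Fin m) ℂ) - Proj)ᴴ * (1 - Proj) := by
        rw [h1, sub_mul, one_mul, mul_sub, mul_one, hProj2]
        abel
      rw [h2]
      exact Matrix.posSemidef_conjTranspose_mul_self _
    have key : (HS ⊗ₖ (1 : Matrix (Fin m) (Fin m) ℂ) + (1 : Matrix (Fin n) (Fin n) ℂ) ⊗ₖ HP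
        + A ⊗ₖ ((1 : Matrix (Fin m) (Fin m) ℂ) - Proj)) - (((s0 + p0 : ℝ)) : ℂ) • 1
        = (HS - (s0 : ℂ) • 1) ⊗ₖ (1 : Matrix (Fin m) (Fin m) ℂ)
          + (1 : Matrix (Fin n) (Fin n) ℂ) ⊗ₖ (HP - (p0 : ℂ) • 1)
          + A ⊗ₖ ((1 : Matrix (Fin m) (Fin m) ℂ) - Proj) := by
      rw [sub_kron HS ((s0 : ℂ) • 1) (1 : Matrix (Fin m) (Fin m) ℂ),
        kron_sub (1 : Matrix (Fin n) (Fin n) ℂ) HP ((p0 : ℂ) • 1),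
        Matrix.smul_kronecker, Matrix.kronecker_smul, Matrix.one_kronecker_one]
      push_cast
      module
    rw [key]
    exact ((posSemidef_kron hpsd1 Matrix.PosSemidef.one).add
      (posSemidef_kron Matrix.PosSemidef.one hpsd2)).add (posSemidef_kron hA hIP)
end

section
/- Let A be an n×n complex matrix and P an m×m complex matrix with P² = P. Then for every complex scalar q, the matrix exponential satisfies exp(q · A ⊗ (I_m − P)) = exp(qA) ⊗ (I_m − P) + I_n ⊗ P. -/
open Matrix Kronecker

attribute [local instance] Matrix.linftyOpNormedRing Matrix.linftyOpNormedAlgebra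

private lemma kron_pow_aux {n m : ℕ} (B : Matrix (Fin n) (Fin n) ℂ)
    (Q : Matrix (Fin m) (Fin m) ℂ) :
    ∀ k : ℕ, (B ⊗ₖ Q) ^ k = (B ^ k) ⊗ₖ (Q ^ k)
  | 0 => by simp [Matrix.one_kronecker_one]
  | k + 1 => by
      rw [pow_succ, pow_succ, pow_succ, kron_pow_aux B Q k, ← Matrix.mul_kronecker_mul]

private lemma exp_kron_proj {n m : ℕ} (B : Matrix (Fin n) (Fin n) ℂ)
    (Q : Matrix (Fin m) (Fin m) ℂ) (hQ : Q * Q = Q) :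
    NormedSpace.exp (B ⊗ₖ Q) =
      (NormedSpace.exp B) ⊗ₖ Q + (1 : Matrix (Fin n) (Fin n) ℂ) ⊗ₖ (1 - Q) := by
  have hQpow : ∀ k : ℕ, Q ^ (k + 1) = Q := by
    intro k
    induction k with
    | zero => simp
    | succ k ih => rw [pow_succ, ih, hQ]
  let L : Matrix (Fin n) (Fin n) ℂ →ₗ[ℂ] Matrix (Fin n × Fin m) (Fin n × Fin m) ℂ :=
    { toFun := fun X => X ⊗ₖ Q
      map_add' := fun X Y => Matrix.add_kronecker X Y Q
      map_smul' := fun c X => Matrix.smul_kronecker c X Q }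
  let L' := LinearMap.toContinuousLinearMap L
  have hsum : Summable (fun k : ℕ => (Nat.factorial k : ℂ)⁻¹ • B ^ k) :=
    NormedSpace.expSeries_summable' B
  rw [NormedSpace.exp_eq_tsum (𝕂 := ℂ), NormedSpace.exp_eq_tsum (𝕂 := ℂ)]
  have hL : (∑' k : ℕ, (Nat.factorial k : ℂ)⁻¹ • B ^ k) ⊗ₖ Q
      = ∑' k : ℕ, (Nat.factorial k : ℂ)⁻¹ • ((B ^ k) ⊗ₖ Q) := by
    have := L'.map_tsum hsum
    simpa [L', L, Matrix.smul_kronecker] using this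
  rw [hL]
  have hsum' : Summable (fun k : ℕ => (Nat.factorial k : ℂ)⁻¹ • ((B ^ k) ⊗ₖ Q)) := by
    have := hsum.map (L' : Matrix (Fin n) (Fin n) ℂ →+ Matrix (Fin n × Fin m) (Fin n × Fin m) ℂ)
      L'.continuous
    simpa [Function.comp_def, L', L, Matrix.smul_kronecker] using this
  have hfun : ∀ k : ℕ, (Nat.factorial k : ℂ)⁻¹ • (B ⊗ₖ Q) ^ k
      = (Nat.factorial k : ℂ)⁻¹ • ((B ^ k) ⊗ₖ Q)
        + (if k = 0 then (1 : Matrix (Fin n) (Fin n) ℂ) ⊗ₖ (1 - Q) else 0) := by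
    intro k
    rcases k with _ | k
    · simp only [pow_zero, Nat.factorial_zero, Nat.cast_one, inv_one, one_smul]
      rw [if_pos trivial, ← Matrix.kronecker_add, add_sub_cancel, Matrix.one_kronecker_one]
    · rw [kron_pow_aux, hQpow k, if_neg (Nat.succ_ne_zero k), add_zero]
  calc ∑' k : ℕ, (Nat.factorial k : ℂ)⁻¹ • (B ⊗ₖ Q) ^ k
      = ∑' k : ℕ, ((Nat.factorial k : ℂ)⁻¹ • ((B ^ k) ⊗ₖ Q)
          + (if k = 0 then (1 : Matrix (Fin n) (Fin n) ℂ) ⊗ₖ (1 - Q) else 0)) :=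
        tsum_congr hfun
    _ = (∑' k : ℕ, (Nat.factorial k : ℂ)⁻¹ • ((B ^ k) ⊗ₖ Q))
          + ∑' k : ℕ, (if k = 0 then (1 : Matrix (Fin n) (Fin n) ℂ) ⊗ₖ (1 - Q) else 0) :=
        Summable.tsum_add hsum' ((hasSum_ite_eq 0 _).summable)
    _ = (∑' k : ℕ, (Nat.factorial k : ℂ)⁻¹ • ((B ^ k) ⊗ₖ Q))
          + (1 : Matrix (Fin n) (Fin n) ℂ) ⊗ₖ (1 - Q) := by rw [tsum_ite_eq]

/-- for any `n×n` matrix `A` and any idempotent `m×m` matrix `P`, and any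
scalar `q`, `exp(q · A ⊗ (I - P)) = exp(qA) ⊗ (I - P) + I ⊗ P`. -/
theorem exp_kron_idempotent {n m : ℕ}
    (A : Matrix (Fin n) (Fin n) ℂ) (P : Matrix (Fin m) (Fin m) ℂ)
    (hP : P * P = P) (q : ℂ) :
    NormedSpace.exp (q • (A ⊗ₖ ((1 : Matrix (Fin m) (Fin m) ℂ) - P))) =
      (NormedSpace.exp (q • A)) ⊗ₖ ((1 : Matrix (Fin m) (Fin m) ℂ) - P)
        + (1 : Matrix (Fin n) (Fin n) ℂ) ⊗ₖ P := by
  have hQ : ((1 : Matrix (Fin m) (Fin m) ℂ) - P) * ((1 : Matrix (Fin m) (Fin m) ℂ) - P)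
      = (1 : Matrix (Fin m) (Fin m) ℂ) - P := by
    rw [sub_mul, mul_sub, mul_sub, one_mul, mul_one, hP]
    simp
  rw [← Matrix.smul_kronecker, exp_kron_proj (q • A) _ hQ, sub_sub_cancel]
end

section
/- Let H_S and A be n×n complex matrices with A·H_S = H_S·A, let H_P be an m×m complex matrix, and let P be an m×m matrix with P² = P and P·H_P = H_P·P. Then for every complex scalar q, exp(q(H_S ⊗ I_m + I_n ⊗ H_P + A ⊗ (I_m − P))) = (exp(qH_S) ⊗ exp(qH_P)) · (exp(qA) ⊗ (I_m − P) + I_n ⊗ P). -/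
open Matrix Kronecker

open NormedSpace in
/-- In a Banach algebra, if `e` is idempotent and commutes with `a`, then
`exp(a*e) = exp(a)*e + 1 - e`. -/
theorem exp_mul_idem_aux {𝔸 : Type*} [NormedRing 𝔸] [NormedAlgebra ℂ 𝔸] [CompleteSpace 𝔸]
    (a e : 𝔸) (he : e * e = e) (hc : a * e = e * a) :
    exp (a * e) = exp a * e + 1 - e := by
  have hcomm : Commute a e := hc
  have hpow : ∀ k : ℕ, (a * e) ^ (k + 1) = a ^ (k + 1) * e := by
    intro k
    rw [hcomm.mul_pow, (IsIdempotentElem.pow_succ_eq k he)]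
  have hs1 : Summable (fun k : ℕ => ((Nat.factorial k : ℂ)⁻¹) • (a * e) ^ k) :=
    NormedSpace.expSeries_summable' (𝕂 := ℂ) (a * e)
  have hs2 : Summable (fun k : ℕ => ((Nat.factorial k : ℂ)⁻¹) • a ^ k) :=
    NormedSpace.expSeries_summable' (𝕂 := ℂ) a
  have hs2' : Summable (fun k : ℕ => (((Nat.factorial k : ℂ)⁻¹) • a ^ k) * e) := hs2.mul_right e
  have h1 : exp (a * e) = ∑' k : ℕ, ((Nat.factorial k : ℂ)⁻¹) • (a * e) ^ k := by
    rw [NormedSpace.exp_eq_tsum (𝕂 := ℂ)]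
  have h2 : exp a = ∑' k : ℕ, ((Nat.factorial k : ℂ)⁻¹) • a ^ k := by
    rw [NormedSpace.exp_eq_tsum (𝕂 := ℂ)]
  rw [h1, h2, Summable.tsum_eq_zero_add hs1, ← hs2.tsum_mul_right e, Summable.tsum_eq_zero_add hs2']
  have hterm : (fun k : ℕ => ((Nat.factorial (k+1) : ℂ)⁻¹) • (a * e) ^ (k + 1))
      = (fun k : ℕ => (((Nat.factorial (k+1) : ℂ)⁻¹) • a ^ (k + 1)) * e) := by
    funext k
    rw [hpow k, smul_mul_assoc]
  rw [hterm]
  simp only [pow_zero, Nat.factorial_zero, Nat.cast_one, inv_one, one_smul, one_mul]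
  abel

open NormedSpace in
theorem Matrix.exp_mul_idem {k : Type*} [Fintype k] [DecidableEq k] (a e : Matrix k k ℂ)
    (he : e * e = e) (hc : a * e = e * a) :
    exp (a * e) = exp a * e + 1 - e := by
  letI : SeminormedRing (Matrix k k ℂ) := Matrix.linftyOpSemiNormedRing
  letI : NormedRing (Matrix k k ℂ) := Matrix.linftyOpNormedRing
  letI : NormedAlgebra ℂ (Matrix k k ℂ) := Matrix.linftyOpNormedAlgebra
  exact exp_mul_idem_aux a e he hc

/-- `B ↦ B ⊗ₖ 1` as an algebra homomorphism. -/
def kronLeft (n m : ℕ) : Matrix (Fin n) (Fin n) ℂ →ₐ[ℂ]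
    Matrix (Fin n × Fin m) (Fin n × Fin m) ℂ where
  toFun B := B ⊗ₖ (1 : Matrix (Fin m) (Fin m) ℂ)
  map_one' := Matrix.one_kronecker_one
  map_mul' B C := by rw [← Matrix.mul_kronecker_mul, one_mul]
  map_zero' := Matrix.zero_kronecker _
  map_add' B C := Matrix.add_kronecker B C _
  commutes' r := by
    simp [Algebra.algebraMap_eq_smul_one, Matrix.smul_kronecker, Matrix.one_kronecker_one]

/-- `B ↦ 1 ⊗ₖ B` as an algebra homomorphism. -/
def kronRight (n m : ℕ) : Matrix (Fin m) (Fin m) ℂ →ₐ[ℂ]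
    Matrix (Fin n × Fin m) (Fin n × Fin m) ℂ where
  toFun B := (1 : Matrix (Fin n) (Fin n) ℂ) ⊗ₖ B
  map_one' := Matrix.one_kronecker_one
  map_mul' B C := by rw [← Matrix.mul_kronecker_mul, one_mul]
  map_zero' := Matrix.kronecker_zero _
  map_add' B C := Matrix.kronecker_add _ B C
  commutes' r := by
    simp [Algebra.algebraMap_eq_smul_one, Matrix.kronecker_smul, Matrix.one_kronecker_one]

open NormedSpace in
theorem exp_kron_left {n m : ℕ} (B : Matrix (Fin n) (Fin n) ℂ) :
    exp (B ⊗ₖ (1 : Matrix (Fin m) (Fin m) ℂ)) = (exp B) ⊗ₖ (1 : Matrix (Fin m) (Fin m) ℂ) := by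
  letI : SeminormedRing (Matrix (Fin n) (Fin n) ℂ) := Matrix.linftyOpSemiNormedRing
  letI : NormedRing (Matrix (Fin n) (Fin n) ℂ) := Matrix.linftyOpNormedRing
  letI : NormedAlgebra ℂ (Matrix (Fin n) (Fin n) ℂ) := Matrix.linftyOpNormedAlgebra
  letI : SeminormedRing (Matrix (Fin n × Fin m) (Fin n × Fin m) ℂ) := Matrix.linftyOpSemiNormedRing
  letI : NormedRing (Matrix (Fin n × Fin m) (Fin n × Fin m) ℂ) := Matrix.linftyOpNormedRing
  letI : NormedAlgebra ℂ (Matrix (Fin n × Fin m) (Fin n × Fin m) ℂ) := Matrix.linftyOpNormedAlgebra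
  letI : NormedAlgebra ℚ (Matrix (Fin n) (Fin n) ℂ) := Matrix.linftyOpNormedAlgebra
  have hcont : Continuous (kronLeft n m) :=
    LinearMap.continuous_of_finiteDimensional (kronLeft n m).toLinearMap
  exact (map_exp (kronLeft n m) hcont B).symm

open NormedSpace in
theorem exp_kron_right {n m : ℕ} (B : Matrix (Fin m) (Fin m) ℂ) :
    exp ((1 : Matrix (Fin n) (Fin n) ℂ) ⊗ₖ B) = (1 : Matrix (Fin n) (Fin n) ℂ) ⊗ₖ (exp B) := by
  letI : SeminormedRing (Matrix (Fin m) (Fin m) ℂ) := Matrix.linftyOpSemiNormedRing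
  letI : NormedRing (Matrix (Fin m) (Fin m) ℂ) := Matrix.linftyOpNormedRing
  letI : NormedAlgebra ℂ (Matrix (Fin m) (Fin m) ℂ) := Matrix.linftyOpNormedAlgebra
  letI : SeminormedRing (Matrix (Fin n × Fin m) (Fin n × Fin m) ℂ) := Matrix.linftyOpSemiNormedRing
  letI : NormedRing (Matrix (Fin n × Fin m) (Fin n × Fin m) ℂ) := Matrix.linftyOpNormedRing
  letI : NormedAlgebra ℂ (Matrix (Fin n × Fin m) (Fin n × Fin m) ℂ) := Matrix.linftyOpNormedAlgebra
  letI : NormedAlgebra ℚ (Matrix (Fin m) (Fin m) ℂ) := Matrix.linftyOpNormedAlgebra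
  have hcont : Continuous (kronRight n m) :=
    LinearMap.continuous_of_finiteDimensional (kronRight n m).toLinearMap
  exact (map_exp (kronRight n m) hcont B).symm

/-- if `A` commutes with `H_S` and the idempotent `P` commutes with `H_P`,
then for every scalar `q`,
`exp(q(H_S ⊗ I + I ⊗ H_P + A ⊗ (I - P)))
  = (exp(qH_S) ⊗ exp(qH_P)) · (exp(qA) ⊗ (I - P) + I ⊗ P)`. -/
theorem exp_H2_factorization {n m : ℕ}
    (HS A : Matrix (Fin n) (Fin n) ℂ) (HP P : Matrix (Fin m) (Fin m) ℂ)
    (hAcomm : A * HS = HS * A)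
    (hP2 : P * P = P) (hPcomm : P * HP = HP * P) (q : ℂ) :
    NormedSpace.exp (q • (HS ⊗ₖ (1 : Matrix (Fin m) (Fin m) ℂ)
        + (1 : Matrix (Fin n) (Fin n) ℂ) ⊗ₖ HP
        + A ⊗ₖ ((1 : Matrix (Fin m) (Fin m) ℂ) - P))) =
      ((NormedSpace.exp (q • HS)) ⊗ₖ (NormedSpace.exp (q • HP)))
        * ((NormedSpace.exp (q • A)) ⊗ₖ ((1 : Matrix (Fin m) (Fin m) ℂ) - P)
            + (1 : Matrix (Fin n) (Fin n) ℂ) ⊗ₖ P) := by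
  set E : Matrix (Fin m) (Fin m) ℂ := (1 : Matrix (Fin m) (Fin m) ℂ) - P with hE
  have hXarg : q • (HS ⊗ₖ (1 : Matrix (Fin m) (Fin m) ℂ)
        + (1 : Matrix (Fin n) (Fin n) ℂ) ⊗ₖ HP + A ⊗ₖ E)
      = ((q • HS) ⊗ₖ (1 : Matrix (Fin m) (Fin m) ℂ)
          + (1 : Matrix (Fin n) (Fin n) ℂ) ⊗ₖ (q • HP)) + (q • A) ⊗ₖ E := by
    rw [smul_add, smul_add, ← Matrix.smul_kronecker, ← Matrix.kronecker_smul,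
      ← Matrix.smul_kronecker, add_assoc]
  -- commutation lemmas
  have hEE : E * E = E := by
    simp only [hE, Matrix.mul_sub, Matrix.sub_mul, one_mul, mul_one, hP2]
    abel
  have hcommXZ : Commute ((q • HS) ⊗ₖ (1 : Matrix (Fin m) (Fin m) ℂ)
      + (1 : Matrix (Fin n) (Fin n) ℂ) ⊗ₖ (q • HP)) ((q • A) ⊗ₖ E) := by
    have h1 : ((q • HS) ⊗ₖ (1 : Matrix (Fin m) (Fin m) ℂ)) * ((q • A) ⊗ₖ E)
        = ((q • A) ⊗ₖ E) * ((q • HS) ⊗ₖ (1 : Matrix (Fin m) (Fin m) ℂ)) := by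
      rw [← Matrix.mul_kronecker_mul, ← Matrix.mul_kronecker_mul, one_mul, mul_one,
        smul_mul_smul_comm, smul_mul_smul_comm, hAcomm]
    have h2 : (((1 : Matrix (Fin n) (Fin n) ℂ)) ⊗ₖ (q • HP)) * ((q • A) ⊗ₖ E)
        = ((q • A) ⊗ₖ E) * (((1 : Matrix (Fin n) (Fin n) ℂ)) ⊗ₖ (q • HP)) := by
      rw [← Matrix.mul_kronecker_mul, ← Matrix.mul_kronecker_mul, one_mul, mul_one,
        Matrix.smul_mul, Matrix.mul_smul, hE, Matrix.mul_sub, Matrix.sub_mul, one_mul, mul_one,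
        hPcomm]
    unfold Commute SemiconjBy
    rw [Matrix.add_mul, Matrix.mul_add, h1, h2]
  have hcommXY : Commute ((q • HS) ⊗ₖ (1 : Matrix (Fin m) (Fin m) ℂ))
      ((1 : Matrix (Fin n) (Fin n) ℂ) ⊗ₖ (q • HP)) := by
    unfold Commute SemiconjBy
    rw [← Matrix.mul_kronecker_mul, ← Matrix.mul_kronecker_mul, one_mul, mul_one, one_mul, mul_one]
  rw [hXarg, Matrix.exp_add_of_commute _ _ hcommXZ, Matrix.exp_add_of_commute _ _ hcommXY,
    exp_kron_left, exp_kron_right]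
  -- compute exp of the third term
  have hZfactor : (q • A) ⊗ₖ E
      = ((q • A) ⊗ₖ (1 : Matrix (Fin m) (Fin m) ℂ)) * ((1 : Matrix (Fin n) (Fin n) ℂ) ⊗ₖ E) := by
    rw [← Matrix.mul_kronecker_mul, mul_one, one_mul]
  have hZcomm : ((q • A) ⊗ₖ (1 : Matrix (Fin m) (Fin m) ℂ)) * ((1 : Matrix (Fin n) (Fin n) ℂ) ⊗ₖ E)
      = ((1 : Matrix (Fin n) (Fin n) ℂ) ⊗ₖ E) * ((q • A) ⊗ₖ (1 : Matrix (Fin m) (Fin m) ℂ)) := by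
    rw [← Matrix.mul_kronecker_mul, ← Matrix.mul_kronecker_mul, one_mul, mul_one, one_mul, mul_one]
  have hZidem : ((1 : Matrix (Fin n) (Fin n) ℂ) ⊗ₖ E) * ((1 : Matrix (Fin n) (Fin n) ℂ) ⊗ₖ E)
      = (1 : Matrix (Fin n) (Fin n) ℂ) ⊗ₖ E := by
    rw [← Matrix.mul_kronecker_mul, one_mul, hEE]
  have hexpZ : NormedSpace.exp ((q • A) ⊗ₖ E)
      = (NormedSpace.exp (q • A)) ⊗ₖ E + (1 : Matrix (Fin n) (Fin n) ℂ) ⊗ₖ P := by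
    rw [hZfactor, Matrix.exp_mul_idem _ _ hZidem hZcomm, exp_kron_left,
      ← Matrix.mul_kronecker_mul, mul_one, one_mul]
    have : (1 : Matrix (Fin n × Fin m) (Fin n × Fin m) ℂ)
        = (1 : Matrix (Fin n) (Fin n) ℂ) ⊗ₖ (1 : Matrix (Fin m) (Fin m) ℂ) :=
      Matrix.one_kronecker_one.symm
    have hsub : (1 : Matrix (Fin n) (Fin n) ℂ) ⊗ₖ E + (1 : Matrix (Fin n) (Fin n) ℂ) ⊗ₖ P
        = (1 : Matrix (Fin n) (Fin n) ℂ) ⊗ₖ (1 : Matrix (Fin m) (Fin m) ℂ) := by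
      rw [← Matrix.kronecker_add, hE, sub_add_cancel]
    rw [this, ← hsub]
    abel
  rw [hexpZ, ← Matrix.mul_kronecker_mul, mul_one, one_mul]
end

section
/- Let H_S and A be n×n complex Hermitian matrices and let v be a unit vector in ℂ^n with H_S v = s0·v and A v = a0·v for real numbers s0, a0. Let δ be a real number, let e0, e1 be the standard basis of ℂ², let H_P = δ·|e1⟩⟨e1| (the 2×2 matrix with δ in the (1,1) entry, indexing from 0, and zeros elsewhere), and set H2 = H_S ⊗ I_2 + I_n ⊗ H_P + A ⊗ |e1⟩⟨e1| acting on ℂ^(2n). Then for every real t, exp(−i t H2) applied to (1/√2)·v ⊗ (e0 + e1) equals e^(−i t s0) · (1/√2) · v ⊗ (e0 + e^(−i ω t) e1), where ω = a0 + δ. -/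
open Matrix Kronecker

/-- The first standard basis vector of `ℂ²`. -/
def e0 : Fin 2 → ℂ := ![1, 0]

/-- The second standard basis vector of `ℂ²`. -/
def e1 : Fin 2 → ℂ := ![0, 1]

/-- The rank-one projection `|e1⟩⟨e1|` onto the second standard basis vector of `ℂ²`. -/
def projE1 : Matrix (Fin 2) (Fin 2) ℂ := !![0, 0; 0, 1]

lemma kron_mulVec_s8 {K L : Type*} [Fintype K] [Fintype L] [DecidableEq K] [DecidableEq L]
    (A : Matrix K K ℂ) (B : Matrix L L ℂ) (x : K → ℂ) (y : L → ℂ) :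
    (A ⊗ₖ B).mulVec (vecKron x y) = vecKron (A.mulVec x) (B.mulVec y) := by
  funext p
  simp only [Matrix.mulVec, dotProduct, vecKron, Matrix.kroneckerMap_apply,
    Fintype.sum_prod_type, Finset.sum_mul_sum]
  congr 1; funext k; congr 1; funext l; ring

lemma exp_mulVec_eigen {N : Type*} [Fintype N] [DecidableEq N]
    (M : Matrix N N ℂ) (w : N → ℂ) (c : ℂ) (h : M.mulVec w = c • w) :
    (NormedSpace.exp M).mulVec w = Complex.exp c • w := by
  have hpow : ∀ k : ℕ, (M ^ k).mulVec w = c ^ k • w := by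
    intro k
    induction k with
    | zero => simp [Matrix.one_mulVec]
    | succ k ih =>
      rw [pow_succ, ← Matrix.mulVec_mulVec, h, Matrix.mulVec_smul, ih, smul_smul, pow_succ]
      ring_nf
  letI : SeminormedRing (Matrix N N ℂ) := Matrix.linftyOpSemiNormedRing
  letI : NormedRing (Matrix N N ℂ) := Matrix.linftyOpNormedRing
  letI : NormedAlgebra ℂ (Matrix N N ℂ) := Matrix.linftyOpNormedAlgebra
  let L : Matrix N N ℂ →ₗ[ℂ] (N → ℂ) :=
    { toFun := fun M => M.mulVec w
      map_add' := fun a b => Matrix.add_mulVec a b w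
      map_smul' := fun c a => by simp [Matrix.smul_mulVec] }
  let L' : Matrix N N ℂ →L[ℂ] (N → ℂ) := ⟨L, L.continuous_of_finiteDimensional⟩
  have hsum : Summable fun k : ℕ => ((Nat.factorial k : ℂ))⁻¹ • M ^ k :=
    NormedSpace.expSeries_summable' (𝕂 := ℂ) M
  have : (NormedSpace.exp M).mulVec w = L' (NormedSpace.exp M) := rfl
  rw [this, NormedSpace.exp_eq_tsum (𝕂 := ℂ), L'.map_tsum hsum]
  have h2 : ∀ k : ℕ, L' (((Nat.factorial k : ℂ))⁻¹ • M ^ k) =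
      (((Nat.factorial k : ℂ))⁻¹ * c ^ k) • w := by
    intro k
    rw [L'.map_smul]
    show ((Nat.factorial k : ℂ))⁻¹ • (M ^ k).mulVec w = _
    rw [hpow k, smul_smul]
  simp_rw [h2]
  have hsumc : Summable fun k : ℕ => ((Nat.factorial k : ℂ))⁻¹ * c ^ k := by
    simpa [smul_eq_mul] using NormedSpace.expSeries_summable' (𝕂 := ℂ) c
  rw [hsumc.tsum_smul_const, Complex.exp_eq_exp_ℂ, NormedSpace.exp_eq_tsum (𝕂 := ℂ)]
  simp [smul_eq_mul]

lemma vecKron_add_right {K L : Type*} (x : K → ℂ) (y z : L → ℂ) :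
    vecKron x (y + z) = vecKron x y + vecKron x z := by
  funext p; simp [vecKron, mul_add]

lemma vecKron_smul_right {K L : Type*} (x : K → ℂ) (c : ℂ) (y : L → ℂ) :
    vecKron x (c • y) = c • vecKron x y := by
  funext p; simp [vecKron]; ring

lemma vecKron_smul_left {K L : Type*} (c : ℂ) (x : K → ℂ) (y : L → ℂ) :
    vecKron (c • x) y = c • vecKron x y := by
  funext p; simp [vecKron]; ring

lemma vecKron_zero_right {K L : Type*} (x : K → ℂ) :
    vecKron x (0 : L → ℂ) = 0 := by
  funext p; simp [vecKron]

lemma projE1_mulVec_e0 : projE1.mulVec e0 = 0 := by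
  funext i; fin_cases i <;>
    simp [projE1, e0, Matrix.mulVec, dotProduct, Fin.sum_univ_two]

lemma projE1_mulVec_e1 : projE1.mulVec e1 = e1 := by
  funext i; fin_cases i <;>
    simp [projE1, e1, Matrix.mulVec, dotProduct, Fin.sum_univ_two]

/-- for Hermitian `H_S`, `A` with common unit eigenvector `v`
(`H_S v = s0 v`, `A v = a0 v`), probe Hamiltonian `H_P = δ|e1⟩⟨e1|` and
`H2 = H_S ⊗ I₂ + I_n ⊗ H_P + A ⊗ |e1⟩⟨e1|`, the free evolution of
`(1/√2) v ⊗ (e0 + e1)` under `H2` is `e^{-its0} (1/√2) v ⊗ (e0 + e^{-iωt} e1)`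
with `ω = a0 + δ`. -/
theorem probe_free_evolution {n : ℕ}
    (HS A : Matrix (Fin n) (Fin n) ℂ) (v : Fin n → ℂ) (s0 a0 δ : ℝ)
    (hHS : HS.IsHermitian) (hA : A.IsHermitian)
    (hv : star v ⬝ᵥ v = 1)
    (hvS : HS.mulVec v = (s0 : ℂ) • v)
    (hvA : A.mulVec v = (a0 : ℂ) • v)
    (t : ℝ) :
    (NormedSpace.exp ((-(Complex.I) * (t : ℂ)) •
        (HS ⊗ₖ (1 : Matrix (Fin 2) (Fin 2) ℂ)
          + (1 : Matrix (Fin n) (Fin n) ℂ) ⊗ₖ ((δ : ℂ) • projE1)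
          + A ⊗ₖ projE1))).mulVec
        (((Real.sqrt 2 : ℂ))⁻¹ • vecKron v (e0 + e1)) =
      Complex.exp (-(Complex.I) * (t : ℂ) * (s0 : ℂ)) •
        (((Real.sqrt 2 : ℂ))⁻¹ •
          vecKron v (e0 + Complex.exp (-(Complex.I) * ((a0 + δ : ℝ) : ℂ) * (t : ℂ)) • e1)) := by
  set H2 : Matrix (Fin n × Fin 2) (Fin n × Fin 2) ℂ :=
    HS ⊗ₖ (1 : Matrix (Fin 2) (Fin 2) ℂ)
      + (1 : Matrix (Fin n) (Fin n) ℂ) ⊗ₖ ((δ : ℂ) • projE1)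
      + A ⊗ₖ projE1 with hH2
  set w0 := vecKron v e0 with hw0
  set w1 := vecKron v e1 with hw1
  have hH2w0 : H2.mulVec w0 = (s0 : ℂ) • w0 := by
    rw [hH2, Matrix.add_mulVec, Matrix.add_mulVec, hw0, kron_mulVec_s8, kron_mulVec_s8, kron_mulVec_s8,
      hvS, hvA, Matrix.one_mulVec, Matrix.smul_mulVec, projE1_mulVec_e0]
    funext p
    simp [vecKron, Pi.smul_apply, smul_eq_mul]
    ring
  have hH2w1 : H2.mulVec w1 = ((s0 : ℂ) + (a0 : ℂ) + (δ : ℂ)) • w1 := by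
    rw [hH2, Matrix.add_mulVec, Matrix.add_mulVec, hw1, kron_mulVec_s8, kron_mulVec_s8, kron_mulVec_s8,
      hvS, hvA, Matrix.one_mulVec, Matrix.one_mulVec, Matrix.smul_mulVec, projE1_mulVec_e1]
    funext p
    simp [vecKron, Pi.smul_apply, smul_eq_mul, add_smul]
    ring
  have h0 : ((-(Complex.I) * (t : ℂ)) • H2).mulVec w0 =
      (-(Complex.I) * (t : ℂ) * (s0 : ℂ)) • w0 := by
    rw [Matrix.smul_mulVec, hH2w0, smul_smul]
  have h1 : ((-(Complex.I) * (t : ℂ)) • H2).mulVec w1 =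
      (-(Complex.I) * (t : ℂ) * ((s0 : ℂ) + (a0 : ℂ) + (δ : ℂ))) • w1 := by
    rw [Matrix.smul_mulVec, hH2w1, smul_smul]
  have e0' := exp_mulVec_eigen _ _ _ h0
  have e1' := exp_mulVec_eigen _ _ _ h1
  rw [vecKron_add_right, Matrix.mulVec_smul, Matrix.mulVec_add, ← hw0, ← hw1, e0', e1',
    vecKron_add_right, vecKron_smul_right, ← hw0, ← hw1]
  have hexp : Complex.exp (-(Complex.I) * (t : ℂ) * ((s0 : ℂ) + (a0 : ℂ) + (δ : ℂ))) =
      Complex.exp (-(Complex.I) * (t : ℂ) * (s0 : ℂ)) *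
        Complex.exp (-(Complex.I) * ((a0 + δ : ℝ) : ℂ) * (t : ℂ)) := by
    rw [← Complex.exp_add]
    congr 1
    push_cast
    ring
  rw [hexp]
  simp only [smul_add, smul_smul]
  module
end

section
/- Let H_1, …, H_k be n×n complex matrices and let H = Σ_{i=1}^k H_i. Then for every real t, the Trotter product converges: the sequence n ↦ (exp(−i H_1 t/n) · exp(−i H_2 t/n) ⋯ exp(−i H_k t/n))^n tends to exp(−i H t) as n → ∞. -/
open Matrix

section TrotterAux

open NormedSpace

set_option linter.unusedSectionVars false

variable {𝔸 : Type*} [NormedRing 𝔸] [NormOneClass 𝔸] [NormedAlgebra ℂ 𝔸] [CompleteSpace 𝔸]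

theorem my_norm_exp_aux (x : 𝔸) (n : ℕ) :
    ‖((Nat.factorial n : ℂ))⁻¹ • x ^ n‖ ≤ ‖x‖ ^ n / (Nat.factorial n) := by
  rw [norm_smul, norm_inv, Complex.norm_natCast, div_eq_inv_mul]
  gcongr
  exact norm_pow_le _ _

theorem my_norm_exp_le (x : 𝔸) : ‖exp x‖ ≤ Real.exp ‖x‖ := by
  rw [exp_eq_tsum ℂ, Real.exp_eq_exp_ℝ, exp_eq_tsum_div]
  refine le_trans (norm_tsum_le_tsum_norm (norm_expSeries_summable' x)) ?_
  exact Summable.tsum_le_tsum (my_norm_exp_aux x) (norm_expSeries_summable' x)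
    (Real.summable_pow_div_factorial ‖x‖)

theorem my_exp_rem (x : 𝔸) : ‖exp x - 1 - x‖ ≤ ‖x‖ ^ 2 * Real.exp ‖x‖ := by
  have hs : Summable fun n : ℕ => ((Nat.factorial n : ℂ))⁻¹ • x ^ n := expSeries_summable' x
  have he := congrFun (exp_eq_tsum (𝕂 := ℂ) (𝔸 := 𝔸)) x
  have h0 : exp x = 1 + x + ∑' n : ℕ, ((Nat.factorial (n + 2) : ℂ))⁻¹ • x ^ (n + 2) := by
    rw [he, Summable.tsum_eq_zero_add hs, Summable.tsum_eq_zero_add ((summable_nat_add_iff 1).2 hs)]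
    simp [add_assoc]
  rw [h0]
  have hnorm : ∀ n : ℕ, ‖((Nat.factorial (n + 2) : ℂ))⁻¹ • x ^ (n + 2)‖
      ≤ ‖x‖ ^ 2 * (‖x‖ ^ n / Nat.factorial n) := by
    intro n
    refine (my_norm_exp_aux x (n + 2)).trans ?_
    have h1 : ‖x‖ ^ (n + 2) / (Nat.factorial (n + 2) : ℝ)
        ≤ ‖x‖ ^ (n + 2) / (Nat.factorial n : ℝ) := by
      gcongr
      omega
    refine h1.trans (le_of_eq ?_)
    rw [pow_add, mul_comm (‖x‖ ^ n), mul_div_assoc]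
  have hs2 : Summable fun n : ℕ => ‖((Nat.factorial (n + 2) : ℂ))⁻¹ • x ^ (n + 2)‖ :=
    (summable_nat_add_iff 2).2 (norm_expSeries_summable' x)
  calc ‖1 + x + (∑' n : ℕ, ((Nat.factorial (n + 2) : ℂ))⁻¹ • x ^ (n + 2)) - 1 - x‖
      = ‖∑' n : ℕ, ((Nat.factorial (n + 2) : ℂ))⁻¹ • x ^ (n + 2)‖ := by
        congr 1; abel
    _ ≤ ∑' n : ℕ, ‖((Nat.factorial (n + 2) : ℂ))⁻¹ • x ^ (n + 2)‖ :=
        norm_tsum_le_tsum_norm hs2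
    _ ≤ ∑' n : ℕ, ‖x‖ ^ 2 * (‖x‖ ^ n / Nat.factorial n) :=
        Summable.tsum_le_tsum hnorm hs2 (by exact (Real.summable_pow_div_factorial ‖x‖).mul_left _)
    _ = ‖x‖ ^ 2 * Real.exp ‖x‖ := by
        rw [tsum_mul_left, Real.exp_eq_exp_ℝ, exp_eq_tsum_div]

theorem my_list_norm_sum_le {E : Type*} [SeminormedAddCommGroup E] (l : List E) :
    ‖l.sum‖ ≤ (l.map norm).sum := by
  induction l with
  | nil => simp
  | cons x l ih =>
    simp only [List.sum_cons, List.map_cons]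
    exact (norm_add_le _ _).trans (by linarith)

theorem my_prod_norm_le (l : List 𝔸) :
    ‖(l.map (exp)).prod‖ ≤ Real.exp ((l.map norm).sum) := by
  induction l with
  | nil => simp
  | cons x l ih =>
    simp only [List.map_cons, List.prod_cons, List.sum_cons]
    calc ‖exp x * (l.map (exp)).prod‖ ≤ ‖exp x‖ * ‖(l.map (exp)).prod‖ := norm_mul_le _ _
      _ ≤ Real.exp ‖x‖ * Real.exp ((l.map norm).sum) :=
          mul_le_mul (my_norm_exp_le x) ih (norm_nonneg _) (Real.exp_pos _).le
      _ = Real.exp (‖x‖ + (l.map norm).sum) := (Real.exp_add _ _).symm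

theorem my_prod_rem (l : List 𝔸) :
    ‖(l.map (exp)).prod - 1 - l.sum‖
      ≤ ((l.map norm).sum) ^ 2 * Real.exp ((l.map norm).sum) := by
  induction l with
  | nil => simp
  | cons x l ih =>
    simp only [List.map_cons, List.prod_cons, List.sum_cons]
    set Q := (l.map (exp)).prod with hQ
    set s := l.sum
    set a := ‖x‖
    set b := (l.map (norm : 𝔸 → ℝ)).sum with hb
    have hb0 : 0 ≤ b := by
      rw [hb]; exact List.sum_nonneg (by simp +contextual [norm_nonneg])
    have ha0 : 0 ≤ a := norm_nonneg x
    have key : exp x * Q - 1 - (x + s)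
        = (exp x - 1 - x) * Q + (1 + x) * (Q - 1 - s) + x * s := by
      noncomm_ring
    rw [key]
    have h1 : ‖(exp x - 1 - x) * Q‖ ≤ a ^ 2 * Real.exp a * Real.exp b :=
      (norm_mul_le _ _).trans
        (mul_le_mul (my_exp_rem x) (my_prod_norm_le l) (norm_nonneg _) (by positivity))
    have h2 : ‖(1 + x) * (Q - 1 - s)‖ ≤ (1 + a) * (b ^ 2 * Real.exp b) := by
      refine (norm_mul_le _ _).trans ?_
      refine mul_le_mul ((norm_add_le _ _).trans (by rw [norm_one])) ih (norm_nonneg _)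
        (by positivity)
    have h3 : ‖x * s‖ ≤ a * b :=
      (norm_mul_le _ _).trans (mul_le_mul_of_nonneg_left (my_list_norm_sum_le l) ha0)
    have expa := Real.add_one_le_exp a
    have expb := Real.one_le_exp hb0
    have expab : Real.exp (a + b) = Real.exp a * Real.exp b := Real.exp_add a b
    have e1 : (1:ℝ) ≤ Real.exp a := Real.one_le_exp ha0
    calc ‖(exp x - 1 - x) * Q + (1 + x) * (Q - 1 - s) + x * s‖
        ≤ a ^ 2 * Real.exp a * Real.exp b + (1 + a) * (b ^ 2 * Real.exp b) + a * b := by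
          refine (norm_add_le _ _).trans ?_
          refine add_le_add ((norm_add_le _ _).trans (add_le_add h1 h2)) h3
      _ ≤ (a + b) ^ 2 * Real.exp (a + b) := by
          rw [expab]
          have k1 : (1 + a) * (b ^ 2 * Real.exp b) ≤ Real.exp a * (b ^ 2 * Real.exp b) :=
            mul_le_mul_of_nonneg_right (by linarith) (by positivity)
          have k2 : a * b ≤ a * b * (Real.exp a * Real.exp b) :=
            le_mul_of_one_le_right (mul_nonneg ha0 hb0)
              (one_le_mul_of_one_le_of_one_le e1 expb)
          nlinarith [mul_pos (Real.exp_pos a) (Real.exp_pos b), mul_nonneg ha0 hb0,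
            mul_nonneg (mul_nonneg ha0 hb0) (mul_pos (Real.exp_pos a) (Real.exp_pos b)).le]

theorem my_pow_sub_pow (A B : 𝔸) (M : ℝ) (hM : 1 ≤ M) (hA : ‖A‖ ≤ M) (hB : ‖B‖ ≤ M) :
    ∀ n : ℕ, ‖A ^ n - B ^ n‖ ≤ n * M ^ n * ‖A - B‖ := by
  intro n
  induction n with
  | zero => simp
  | succ n ih =>
    have hM0 : (0:ℝ) ≤ M := le_trans zero_le_one hM
    have key : A ^ (n + 1) - B ^ (n + 1) = A * (A ^ n - B ^ n) + (A - B) * B ^ n := by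
      rw [pow_succ, pow_succ]
      noncomm_ring
      rw [pow_mul_comm', pow_mul_comm']
    rw [key]
    have h1 : ‖A * (A ^ n - B ^ n)‖ ≤ M * (n * M ^ n * ‖A - B‖) :=
      (norm_mul_le _ _).trans (mul_le_mul hA ih (norm_nonneg _) hM0)
    have h2 : ‖(A - B) * B ^ n‖ ≤ ‖A - B‖ * M ^ n :=
      (norm_mul_le _ _).trans (mul_le_mul_of_nonneg_left
        ((norm_pow_le _ _).trans (pow_le_pow_left₀ (norm_nonneg _) hB n)) (norm_nonneg _))
    have hMn : M ^ n ≤ M ^ (n + 1) := pow_le_pow_right₀ hM (by omega)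
    calc ‖A * (A ^ n - B ^ n) + (A - B) * B ^ n‖
        ≤ M * (n * M ^ n * ‖A - B‖) + ‖A - B‖ * M ^ n := by
          exact (norm_add_le _ _).trans (add_le_add h1 h2)
      _ ≤ ((n : ℝ) + 1) * M ^ (n + 1) * ‖A - B‖ := by
          have h3 : M * (n * M ^ n * ‖A - B‖) = n * M ^ (n+1) * ‖A - B‖ := by ring
          have h4 : ‖A - B‖ * M ^ n ≤ ‖A - B‖ * M ^ (n+1) :=
            mul_le_mul_of_nonneg_left hMn (norm_nonneg _)
          rw [h3]
          nlinarith [norm_nonneg (A - B)]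
      _ = ((n + 1 : ℕ) : ℝ) * M ^ (n + 1) * ‖A - B‖ := by push_cast; ring

theorem trotter_general {k : ℕ} (X : Fin k → 𝔸) :
    Filter.Tendsto
      (fun n : ℕ => (((List.finRange k).map (fun i => exp (((n : ℂ))⁻¹ • X i))).prod) ^ n)
      Filter.atTop (nhds (exp (∑ i : Fin k, X i))) := by
  rw [tendsto_iff_norm_sub_tendsto_zero]
  set Y := ∑ i : Fin k, X i with hY
  set r := ∑ i : Fin k, ‖X i‖ with hr
  have hr0 : 0 ≤ r := Finset.sum_nonneg fun i _ => norm_nonneg _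
  have hYr : ‖Y‖ ≤ r := norm_sum_le _ _
  set C := 2 * r ^ 2 * Real.exp r * Real.exp r with hC
  refine squeeze_zero' (Filter.Eventually.of_forall fun n => norm_nonneg _) ?_
    (tendsto_const_div_atTop_nhds_zero_nat C)
  filter_upwards [Filter.eventually_ge_atTop 1] with n hn
  have hnR : (1:ℝ) ≤ (n:ℝ) := by exact_mod_cast hn
  have hn0 : (0:ℝ) < (n:ℝ) := by linarith
  have hnC : ((n:ℂ)) ≠ 0 := by
    exact_mod_cast Nat.cast_ne_zero.2 (by omega : n ≠ 0)
  set u := ((n:ℝ))⁻¹ * r with hu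
  have hu0 : 0 ≤ u := by positivity
  have hur : u ≤ r := by
    have hinv : ((n:ℝ))⁻¹ ≤ 1 := inv_le_one_of_one_le₀ hnR
    nlinarith
  set l : List 𝔸 := (List.finRange k).map fun i => ((n:ℂ))⁻¹ • X i with hl
  have hmap : (List.finRange k).map (fun i => exp (((n:ℂ))⁻¹ • X i)) = l.map (exp) :=
    List.map_map.symm
  have hsum : l.sum = ((n:ℂ))⁻¹ • Y := by
    rw [hl, ← Fin.sum_univ_def, hY, Finset.smul_sum]
  have hb : (l.map norm).sum = u := by
    rw [hl, List.map_map]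
    rw [show (norm ∘ fun i => ((n:ℂ))⁻¹ • X i) = fun i : Fin k => ((n:ℝ))⁻¹ * ‖X i‖ by
      funext i
      simp [Function.comp, norm_smul]]
    rw [← Fin.sum_univ_def, ← Finset.mul_sum, hu, hr]
  set A := (l.map (exp)).prod with hA
  set B := exp (((n:ℂ))⁻¹ • Y) with hB
  have hAn : ‖A‖ ≤ Real.exp u := by
    have := my_prod_norm_le l
    rwa [hb] at this
  have hyu : ‖((n:ℂ))⁻¹ • Y‖ ≤ u := by
    rw [norm_smul, norm_inv, Complex.norm_natCast, hu]
    exact mul_le_mul_of_nonneg_left hYr (by positivity)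
  have hBn : ‖B‖ ≤ Real.exp u := (my_norm_exp_le _).trans (Real.exp_le_exp.2 hyu)
  have hAB : ‖A - B‖ ≤ 2 * u ^ 2 * Real.exp u := by
    have e1 : ‖A - 1 - l.sum‖ ≤ u ^ 2 * Real.exp u := by
      have := my_prod_rem l
      rwa [hb] at this
    have e2 : ‖B - 1 - ((n:ℂ))⁻¹ • Y‖ ≤ u ^ 2 * Real.exp u :=
      (my_exp_rem _).trans
        (mul_le_mul (pow_le_pow_left₀ (norm_nonneg _) hyu 2) (Real.exp_le_exp.2 hyu)
          (Real.exp_pos _).le (by positivity))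
    calc ‖A - B‖ = ‖(A - 1 - l.sum) - (B - 1 - ((n:ℂ))⁻¹ • Y)‖ := by
          rw [hsum]; congr 1; abel
      _ ≤ ‖A - 1 - l.sum‖ + ‖B - 1 - ((n:ℂ))⁻¹ • Y‖ := norm_sub_le _ _
      _ ≤ u ^ 2 * Real.exp u + u ^ 2 * Real.exp u := add_le_add e1 e2
      _ = 2 * u ^ 2 * Real.exp u := by ring
  have hpow := my_pow_sub_pow A B (Real.exp u) (Real.one_le_exp hu0) hAn hBn n
  have hMn : (Real.exp u) ^ n = Real.exp r := by
    rw [← Real.exp_nat_mul, hu]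
    congr 1
    field_simp
  have hBpow : B ^ n = exp Y := by
    letI : NormedAlgebra ℚ 𝔸 := NormedAlgebra.restrictScalars ℚ ℂ 𝔸
    rw [hB, ← NormedSpace.exp_nsmul, ← Nat.cast_smul_eq_nsmul ℂ, smul_smul, mul_inv_cancel₀ hnC, one_smul]
  rw [hmap, ← hA, ← hBpow]
  calc ‖A ^ n - B ^ n‖ ≤ (n : ℝ) * Real.exp r * ‖A - B‖ := by
        rw [← hMn]; exact hpow
    _ ≤ (n : ℝ) * Real.exp r * (2 * u ^ 2 * Real.exp u) := by
        exact mul_le_mul_of_nonneg_left hAB (by positivity)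
    _ ≤ C / n := by
        rw [le_div_iff₀ hn0, hu, hC]
        have heq : (n:ℝ) * Real.exp r * (2 * (((n:ℝ))⁻¹ * r) ^ 2 * Real.exp u) * n
            = 2 * r ^ 2 * Real.exp r * Real.exp u := by
          field_simp
        rw [heq]
        exact mul_le_mul_of_nonneg_left (Real.exp_le_exp.2 hur) (by positivity)

end TrotterAux

/-- Trotter product formula: for `n×n` complex matrices `H_1, …, H_k` with
sum `H` and any real `t`, the sequence
`(exp(-iH_1 t/n) ⋯ exp(-iH_k t/n))^n` converges to `exp(-iHt)` as `n → ∞`. -/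
theorem trotter_product_formula {N k : ℕ}
    (H : Fin k → Matrix (Fin N) (Fin N) ℂ) (t : ℝ) :
    Filter.Tendsto
      (fun n : ℕ =>
        (((List.finRange k).map
          (fun i => NormedSpace.exp
            ((-(Complex.I) * (t : ℂ) / (n : ℂ)) • H i))).prod) ^ n)
      Filter.atTop
      (nhds (NormedSpace.exp ((-(Complex.I) * (t : ℂ)) • ∑ i : Fin k, H i))) := by
  rcases Nat.eq_zero_or_pos N with hN | hN
  · subst hN
    haveI : Subsingleton (Matrix (Fin 0) (Fin 0) ℂ) :=
      ⟨fun a b => funext fun i => i.elim0⟩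
    exact tendsto_const_nhds.congr fun n => Subsingleton.elim _ _
  · haveI : Nonempty (Fin N) := Fin.pos_iff_nonempty.mp hN
    letI : SeminormedRing (Matrix (Fin N) (Fin N) ℂ) := Matrix.linftyOpSemiNormedRing
    letI : NormedRing (Matrix (Fin N) (Fin N) ℂ) := Matrix.linftyOpNormedRing
    letI : NormedAlgebra ℂ (Matrix (Fin N) (Fin N) ℂ) := Matrix.linftyOpNormedAlgebra
    haveI : NormOneClass (Matrix (Fin N) (Fin N) ℂ) := Matrix.linfty_opNormOneClass
    have h1 : ∀ (n : ℕ) (i : Fin k), (-(Complex.I) * (t:ℂ) / (n:ℂ)) • H i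
        = ((n:ℂ))⁻¹ • ((-(Complex.I) * (t:ℂ)) • H i) := by
      intro n i
      rw [smul_smul, div_eq_mul_inv, mul_comm]
    simp only [h1]
    rw [show ((-(Complex.I) * (t:ℂ)) • ∑ i : Fin k, H i)
        = ∑ i : Fin k, (-(Complex.I) * (t:ℂ)) • H i from Finset.smul_sum]
    exact trotter_general (fun i => (-(Complex.I) * (t:ℂ)) • H i)
end
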